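/- arXiv:1907.02680 — 2 statements merged into one kernel-verified Lean document; each statement's English description precedes it below -/
import Mathlib

section
/- Lower bound for the modified wave packet: let n ≥ 2, with the two families of wave packets θ_{ω,σ} and θ̃_{ν,σ} as described. There exists a constant c > 0 such that for all ω, ν ∈ S^{n−1} and σ ∈ (0,1) with |ω − ν| ≤ (1/16)√σ, one has θ̃_{ν,σ}(ζ) ≥ c σ^{−(n−1)/4} for every ζ ∈ supp(θ_{ω,σ}); moreover every ζ ∈ supp(θ_{ω,σ}) satisfies |ζ̂ − ν| ≤ (3/8)√σ. -/
open MeasureTheory Real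
open scoped ENNReal NNReal Classical

noncomputable section

abbrev En (n : ℕ) : Type := EuclideanSpace ℝ (Fin n)

/-- The first standard basis vector of ℝⁿ. -/
def e1 (n : ℕ) : En n := if h : 0 < n then EuclideanSpace.single (⟨0, h⟩ : Fin n) (1 : ℝ) else 0

/-- Surface measure on the unit sphere `S^{n-1}`: the `(n-1)`-dimensional Hausdorff measure
restricted to the unit sphere of ℝⁿ. -/
def μSph (n : ℕ) : Measure (En n) := (μH[(n : ℝ) - 1]).restrict (Metric.sphere (0 : En n) 1)

/-- Measure on the cosphere bundle ℝⁿ × S^{n-1}. -/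
def μSp (n : ℕ) : Measure (En n × En n) := (volume : Measure (En n)).prod (μSph n)

/-- Anisotropic ball `B_τ(x,ω)` on the cosphere bundle. -/
def Ball (n : ℕ) (x ω : En n) (τ : ℝ) : Set (En n × En n) :=
  {p : En n × En n | ‖x - p.1‖ ^ 2 + |(inner ℝ ω (x - p.1) : ℝ)| + ‖ω - p.2‖ ^ 2 ≤ τ ^ 2}

/-- The normalizing constant `c_σ`. -/
def cNorm (n : ℕ) (φ : En n → ℝ) (σ : ℝ) : ℝ :=
  (∫ ν, (φ ((Real.sqrt σ)⁻¹ • (e1 n - ν))) ^ 2 ∂μSph n) ^ (-(1 : ℝ) / 2)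

/-- `φ_{ω,σ}`. -/
def phiOS (n : ℕ) (φ : En n → ℝ) (ω : En n) (σ : ℝ) (ζ : En n) : ℝ :=
  if ζ = 0 then 0 else cNorm n φ σ * φ ((Real.sqrt σ)⁻¹ • (‖ζ‖⁻¹ • ζ - ω))

/-- `Ψ_σ`. -/
def PsiS (n : ℕ) (Ψ : En n → ℝ) (σ : ℝ) (ζ : En n) : ℝ := Ψ (σ • ζ)

/-- `ψ_{ω,σ} = Ψ_σ φ_{ω,σ}`. -/
def psiOS (n : ℕ) (φ Ψ : En n → ℝ) (ω : En n) (σ : ℝ) (ζ : En n) : ℝ :=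
  PsiS n Ψ σ ζ * phiOS n φ ω σ ζ

/-- `φ_ω(ζ) = ∫₀⁴ ψ_{ω,τ}(ζ) dτ/τ`. -/
def phiO (n : ℕ) (φ Ψ : En n → ℝ) (ω ζ : En n) : ℝ :=
  ∫ τ in Set.Ioo (0 : ℝ) 4, psiOS n φ Ψ ω τ ζ * τ⁻¹

/-- `θ_{ω,σ} = Ψ_σ φ_ω`. -/
def theta (n : ℕ) (φ Ψ : En n → ℝ) (ω : En n) (σ : ℝ) (ζ : En n) : ℝ :=
  PsiS n Ψ σ ζ * phiO n φ Ψ ω ζ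

/-- The angular average `∫_{S^{n-1}} φ_ν(ζ)² dν`. -/
def angAvg (n : ℕ) (φ Ψ : En n → ℝ) (ζ : En n) : ℝ := ∫ ν, (phiO n φ Ψ ν ζ) ^ 2 ∂μSph n

/-- `χ_{ω,σ} = (∫ φ_ν² dν)⁻¹ θ_{ω,σ}` on `supp θ_{ω,σ}`, and `0` elsewhere. -/
def chi (n : ℕ) (φ Ψ : En n → ℝ) (ω : En n) (σ : ℝ) (ζ : En n) : ℝ :=
  if ζ ∈ tsupport (theta n φ Ψ ω σ) then (angAvg n φ Ψ ζ)⁻¹ * theta n φ Ψ ω σ ζ else 0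

/-- Fourier transform, convention `𝓕f(ξ) = ∫ e^{-ix·ξ} f(x) dx`. -/
def FT (n : ℕ) (f : En n → ℂ) (ξ : En n) : ℂ :=
  ∫ x, Complex.exp (-(Complex.I * ((inner ℝ x ξ : ℝ) : ℂ))) * f x

/-- Inverse Fourier transform. -/
def FTinv (n : ℕ) (g : En n → ℂ) (x : En n) : ℂ :=
  ((2 * Real.pi : ℝ) : ℂ) ^ (-(n : ℤ)) * ∫ ξ, Complex.exp (Complex.I * ((inner ℝ x ξ : ℝ) : ℂ)) * g ξ

/-- Fourier multiplier `m(D)f = 𝓕⁻¹(m 𝓕 f)`. -/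
def mulD (n : ℕ) (m : En n → ℂ) (f : En n → ℂ) : En n → ℂ :=
  FTinv n fun ζ => m ζ * FT n f ζ

/-- Fourier multiplier with a real symbol. -/
def mulDR (n : ℕ) (m : En n → ℝ) (f : En n → ℂ) : En n → ℂ :=
  mulD n (fun ζ => (m ζ : ℂ)) f

/-- Conical square function `Sf(x,ω)`. -/
def Sfun (n : ℕ) (φ Ψ : En n → ℝ) (f : En n → ℂ) (z : En n × En n) : ℝ :=
  Real.sqrt (∫ σ in Set.Ioo (0 : ℝ) 1,
    (⨍ p in Ball n z.1 z.2 (Real.sqrt σ), ‖mulDR n (theta n φ Ψ p.2 σ) f p.1‖ ^ 2 ∂μSp n) * σ⁻¹)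

/-- `L^p(ℝⁿ)` norm. -/
def LpN (n : ℕ) (p : ℝ) (g : En n → ℂ) : ℝ := (∫ x, ‖g x‖ ^ p) ^ (1 / p)

/-- The (equivalent) `H^p_FIO` norm `N_p(f) = ‖q(D)f‖_p + ‖Sf‖_{L^p(S^*ℝⁿ)}`. -/
def Np (n : ℕ) (φ Ψ q : En n → ℝ) (p : ℝ) (f : En n → ℂ) : ℝ :=
  LpN n p (mulDR n q f) + (∫ z, Sfun n φ Ψ f z ^ p ∂μSp n) ^ (1 / p)

/-- The high-frequency remainder symbol `r`. -/
def rSym (n : ℕ) (Ψ : En n → ℝ) (ζ : En n) : ℝ :=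
  if ζ = 0 then 1 else Real.sqrt (∫ σ in Set.Ioi (1 : ℝ), (Ψ (σ • ζ)) ^ 2 * σ⁻¹)

/-- The low-frequency symbol `s`. -/
def sSym (n : ℕ) (φ Ψ : En n → ℝ) (ζ : En n) : ℝ :=
  1 - ∫ σ in Set.Ioo (0 : ℝ) 1, (∫ ω, theta n φ Ψ ω σ ζ * chi n φ Ψ ω σ ζ ∂μSph n) * σ⁻¹

/-- Total surface measure `|S^{n-1}|`. -/
def sphVol (n : ℕ) : ℝ := (μSph n Set.univ).toReal

/-- The wave packet transform `W`. -/
def Wt (n : ℕ) (φ Ψ : En n → ℝ) (f : En n → ℂ) (y ν : En n) (σ : ℝ) : ℂ :=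
  if σ < 1 then mulDR n (psiOS n φ Ψ ν σ) f y
  else if σ ≤ Real.exp 1 then ((sphVol n ^ (-(1 : ℝ) / 2) : ℝ) : ℂ) * mulDR n (rSym n Ψ) f y
  else 0

/-- The wave packet transform `V`. -/
def Vt (n : ℕ) (φ Ψ : En n → ℝ) (f : En n → ℂ) (y ν : En n) (σ : ℝ) : ℂ :=
  if σ < 1 then mulDR n (theta n φ Ψ ν σ) f y
  else if σ ≤ Real.exp 1 then ((sphVol n ^ (-(1 : ℝ) / 2) : ℝ) : ℂ) * mulDR n (sSym n φ Ψ) f y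
  else 0

/-- Tent-space square function of `W f`. -/
def AW (n : ℕ) (φ Ψ : En n → ℝ) (f : En n → ℂ) (z : En n × En n) : ℝ :=
  Real.sqrt (∫ σ in Set.Ioi (0 : ℝ),
    (⨍ p in Ball n z.1 z.2 (Real.sqrt σ), ‖Wt n φ Ψ f p.1 p.2 σ‖ ^ 2 ∂μSp n) * σ⁻¹)

/-- Tent-space square function of `V f`. -/
def AV (n : ℕ) (φ Ψ : En n → ℝ) (f : En n → ℂ) (z : En n × En n) : ℝ :=
  Real.sqrt (∫ σ in Set.Ioi (0 : ℝ),
    (⨍ p in Ball n z.1 z.2 (Real.sqrt σ), ‖Vt n φ Ψ f p.1 p.2 σ‖ ^ 2 ∂μSp n) * σ⁻¹)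

/-- The list of directions encoding the mixed derivative `⟨ω,∇⟩^β ∂^α`. -/
def dirList (n : ℕ) (α : Fin n → ℕ) (β : ℕ) (ω : En n) : List (En n) :=
  List.replicate β ω ++
    (List.ofFn fun i : Fin n => List.replicate (α i) (EuclideanSpace.single i (1 : ℝ))).flatten


namespace WPaux

variable {m : ℕ}

lemma normsq (k : ℕ) (x : En k) : ‖x‖ ^ 2 = ∑ i, x i ^ 2 := by
  rw [EuclideanSpace.norm_eq, Real.sq_sqrt (by positivity)]
  simp [Real.norm_eq_abs, sq_abs]

lemma e1_zero (m : ℕ) : (e1 (m+1)) 0 = 1 := by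
  simp [e1, EuclideanSpace.single_apply]

lemma e1_succ (m : ℕ) (j : Fin m) : (e1 (m+1)) j.succ = 0 := by
  simp [e1, EuclideanSpace.single_apply, Fin.succ_ne_zero]

lemma norm_e1 (m : ℕ) : ‖e1 (m+1)‖ = 1 := by
  rw [e1, dif_pos (Nat.succ_pos m)]
  simpa using EuclideanSpace.norm_single (𝕜 := ℝ) (⟨0, Nat.succ_pos m⟩ : Fin (m+1)) 1

/-- projection forgetting the 0-th coordinate. -/
def prj (m : ℕ) (x : En (m+1)) : En m := WithLp.toLp 2 (fun j : Fin m => x j.succ)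

/-- graph map. -/
def gph (m : ℕ) (y : En m) : En (m+1) :=
  WithLp.toLp 2 (Fin.cons (Real.sqrt (1 - ‖y‖^2)) (WithLp.ofLp y) : Fin (m+1) → ℝ)

lemma gph_zero (y : En m) : gph m y 0 = Real.sqrt (1 - ‖y‖^2) := rfl

lemma gph_succ (y : En m) (j : Fin m) : gph m y j.succ = y j := by
  simp [gph]

lemma prj_gph (y : En m) : prj m (gph m y) = y := by
  ext j; simp [prj, gph]

end WPaux

namespace WPaux

lemma normsq_succ (x : En (m+1)) : ‖x‖^2 = x 0 ^ 2 + ‖prj m x‖^2 := by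
  rw [normsq, normsq, Fin.sum_univ_succ]
  simp [prj]

lemma prj_norm_le (x : En (m+1)) : ‖prj m x‖ ≤ ‖x‖ := by
  have h := normsq_succ x
  nlinarith [norm_nonneg (prj m x), norm_nonneg x, sq_nonneg (x 0)]

lemma prj_sub (x y : En (m+1)) : prj m (x - y) = prj m x - prj m y := by
  ext j; simp [prj]

lemma prj_lipschitz (m : ℕ) : LipschitzWith 1 (prj m) := by
  refine LipschitzWith.of_dist_le_mul fun x y => ?_
  rw [dist_eq_norm, dist_eq_norm, ← prj_sub]
  simpa using prj_norm_le (x - y)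

lemma norm_gph (y : En m) (h : ‖y‖ ≤ 1) : ‖gph m y‖ = 1 := by
  have h2 : ‖gph m y‖^2 = 1 := by
    rw [normsq_succ, prj_gph, gph_zero, Real.sq_sqrt]
    · ring
    · nlinarith [norm_nonneg y]
  nlinarith [norm_nonneg (gph m y)]

lemma sub_apply' (x y : En (m+1)) (i : Fin (m+1)) : (x - y) i = x i - y i := rfl

lemma e1_sub_normsq (x : En (m+1)) : ‖e1 (m+1) - x‖^2 = (1 - x 0)^2 + ‖prj m x‖^2 := by
  rw [normsq_succ, sub_apply', e1_zero, prj_sub]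
  have h0 : prj m (e1 (m+1)) = 0 := by ext j; simp [prj, e1_succ]
  rw [h0, zero_sub, norm_neg]

end WPaux

namespace WPaux

lemma sqrt_diff_le {s t : ℝ} (hs : s ≤ 1) (ht : t ≤ 1) (hs' : 9/64 ≤ s) (ht' : 9/64 ≤ t) :
    (Real.sqrt s - Real.sqrt t)^2 ≤ (16/9) * (s - t)^2 := by
  have h1 : Real.sqrt s ≥ 3/8 := by
    rw [show (3/8 : ℝ) = Real.sqrt (9/64) by rw [show (9/64:ℝ) = (3/8)^2 by norm_num, Real.sqrt_sq]; norm_num]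
    exact Real.sqrt_le_sqrt hs'
  have h2 : Real.sqrt t ≥ 3/8 := by
    rw [show (3/8 : ℝ) = Real.sqrt (9/64) by rw [show (9/64:ℝ) = (3/8)^2 by norm_num, Real.sqrt_sq]; norm_num]
    exact Real.sqrt_le_sqrt ht'
  have hs0 : (0:ℝ) ≤ s := by linarith
  have ht0 : (0:ℝ) ≤ t := by linarith
  have e1 : Real.sqrt s ^ 2 = s := Real.sq_sqrt hs0
  have e2 : Real.sqrt t ^ 2 = t := Real.sq_sqrt ht0
  have hfact : (Real.sqrt s - Real.sqrt t) * (Real.sqrt s + Real.sqrt t) = s - t := by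
    have : (Real.sqrt s - Real.sqrt t) * (Real.sqrt s + Real.sqrt t)
        = Real.sqrt s ^ 2 - Real.sqrt t ^ 2 := by ring
    rw [this, e1, e2]
  have h4 : (9/16:ℝ) ≤ (Real.sqrt s + Real.sqrt t)^2 := by nlinarith
  have h5 : (Real.sqrt s - Real.sqrt t)^2 * (9/16)
      ≤ (Real.sqrt s - Real.sqrt t)^2 * (Real.sqrt s + Real.sqrt t)^2 :=
    mul_le_mul_of_nonneg_left h4 (sq_nonneg _)
  have h6 : (s - t)^2 = (Real.sqrt s - Real.sqrt t)^2 * (Real.sqrt s + Real.sqrt t)^2 := by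
    rw [← hfact]; ring
  rw [h6]; linarith

lemma gph_sub_normsq (y z : En m) :
    ‖gph m y - gph m z‖^2 = (Real.sqrt (1 - ‖y‖^2) - Real.sqrt (1 - ‖z‖^2))^2 + ‖y - z‖^2 := by
  have h0 : (gph m y - gph m z) 0 = Real.sqrt (1-‖y‖^2) - Real.sqrt (1-‖z‖^2) := by
    rw [sub_apply', gph_zero, gph_zero]
  rw [normsq_succ, h0, prj_sub, prj_gph, prj_gph]

lemma gph_lipschitzOn (m : ℕ) :
    LipschitzOnWith 3 (gph m) {y : En m | ‖y‖^2 ≤ 55/64} := by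
  refine LipschitzOnWith.of_dist_le_mul fun y hy z hz => ?_
  simp only [Set.mem_setOf_eq] at hy hz
  rw [dist_eq_norm, dist_eq_norm]
  have hy1 : ‖y‖ ≤ 1 := by nlinarith [norm_nonneg y]
  have hz1 : ‖z‖ ≤ 1 := by nlinarith [norm_nonneg z]
  have key : ‖gph m y - gph m z‖^2 ≤ 9 * ‖y - z‖^2 := by
    rw [gph_sub_normsq]
    have h1 : (Real.sqrt (1 - ‖y‖^2) - Real.sqrt (1 - ‖z‖^2))^2
        ≤ (16/9) * ((1 - ‖y‖^2) - (1 - ‖z‖^2))^2 := by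
      apply sqrt_diff_le <;> nlinarith [norm_nonneg y, norm_nonneg z]
    have h2 : ((1 - ‖y‖^2) - (1 - ‖z‖^2))^2 ≤ 4 * ‖y - z‖^2 := by
      have hyz : |‖y‖ - ‖z‖| ≤ ‖y - z‖ := abs_norm_sub_norm_le y z
      have h3 : (‖y‖ - ‖z‖)^2 ≤ ‖y - z‖^2 := by
        rw [← sq_abs (‖y‖ - ‖z‖)]
        exact pow_le_pow_left₀ (abs_nonneg _) hyz 2
      nlinarith [norm_nonneg y, norm_nonneg z]
    nlinarith
  have h3 : (0:ℝ) ≤ ‖gph m y - gph m z‖ := norm_nonneg _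
  have h4 : (0:ℝ) ≤ ‖y - z‖ := norm_nonneg _
  have : ‖gph m y - gph m z‖ ≤ 3 * ‖y - z‖ := by nlinarith
  simpa using this

lemma cap_subset_gph (m : ℕ) {r : ℝ} (hr54 : r^2 ≤ 5/4) :
    Metric.sphere (0 : En (m+1)) 1 ∩ Metric.closedBall (e1 (m+1)) r ⊆
      gph m '' ({y : En m | ‖y‖^2 ≤ 55/64} ∩ Metric.closedBall 0 r) := by
  rintro ν ⟨hs, hb⟩
  have hν1 : ‖ν‖ = 1 := by simpa using hs
  have hνsq : ν 0 ^ 2 + ‖prj m ν‖^2 = 1 := by rw [← normsq_succ, hν1]; norm_num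
  have hd : ‖e1 (m+1) - ν‖ ≤ r := by
    rw [Metric.mem_closedBall, dist_comm, dist_eq_norm] at hb; exact hb
  have hd2 : (1 - ν 0)^2 + ‖prj m ν‖^2 ≤ 5/4 := by
    rw [← e1_sub_normsq]; nlinarith [norm_nonneg (e1 (m+1) - ν)]
  have hν0 : (3:ℝ)/8 ≤ ν 0 := by nlinarith
  refine ⟨prj m ν, ⟨?_, ?_⟩, ?_⟩
  · simp only [Set.mem_setOf_eq]; nlinarith
  · rw [Metric.mem_closedBall, dist_zero_right]
    have h1 : ‖prj m ν‖^2 ≤ r^2 := by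
      have := e1_sub_normsq ν
      nlinarith [norm_nonneg (e1 (m+1) - ν), sq_nonneg (1 - ν 0)]
    have hr0 : (0:ℝ) ≤ r := le_trans (norm_nonneg _) hd
    nlinarith [norm_nonneg (prj m ν)]
  · ext i
    refine Fin.cases ?_ (fun j => ?_) i
    · rw [gph_zero]
      have : 1 - ‖prj m ν‖^2 = ν 0 ^ 2 := by linarith
      rw [this, Real.sqrt_sq (by linarith)]
    · rw [gph_succ]; rfl

end WPaux

namespace WPaux

lemma muH_En_eq (m : ℕ) :
    (μH[(m:ℝ)] : Measure (En m)) = (μH[(Module.finrank ℝ (En m) : ℝ)] : Measure (En m)) := by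
  rw [finrank_euclideanSpace_fin]

lemma muH_cb (m : ℕ) {r : ℝ} (hr : 0 ≤ r) :
    μH[(m:ℝ)] (Metric.closedBall (0 : En m) r)
      = ENNReal.ofReal (r ^ m) * μH[(m:ℝ)] (Metric.ball (0 : En m) 1) := by
  rw [muH_En_eq]
  have := Measure.addHaar_closedBall (μ := (μH[(Module.finrank ℝ (En m) : ℝ)] : Measure (En m)))
    (0 : En m) hr
  rw [this, finrank_euclideanSpace_fin]

lemma muH_cb_pos (m : ℕ) {ρ : ℝ} (h : 0 < ρ) :
    0 < μH[(m:ℝ)] (Metric.closedBall (0 : En m) ρ) := by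
  rw [muH_En_eq]
  exact Metric.measure_closedBall_pos _ _ h

lemma muH_cb_lt_top (m : ℕ) (ρ : ℝ) :
    μH[(m:ℝ)] (Metric.closedBall (0 : En m) ρ) < ∞ := by
  rw [muH_En_eq]
  exact (isCompact_closedBall _ _).measure_lt_top

end WPaux

namespace WPaux

lemma muSph_eq (m : ℕ) :
    μSph (m+1) = (μH[(m:ℝ)] : Measure (En (m+1))).restrict (Metric.sphere 0 1) := by
  unfold μSph
  norm_num

lemma capU (m : ℕ) {r : ℝ} (hr0 : 0 ≤ r) (hr54 : r^2 ≤ 5/4) :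
    μSph (m+1) (Metric.closedBall (e1 (m+1)) r)
      ≤ (3:ℝ≥0∞)^m * (ENNReal.ofReal (r ^ m) * μH[(m:ℝ)] (Metric.ball (0 : En m) 1)) := by
  rw [muSph_eq, Measure.restrict_apply measurableSet_closedBall, Set.inter_comm]
  calc μH[(m:ℝ)] (Metric.sphere (0 : En (m+1)) 1 ∩ Metric.closedBall (e1 (m+1)) r)
      ≤ μH[(m:ℝ)] (gph m '' ({y : En m | ‖y‖^2 ≤ 55/64} ∩ Metric.closedBall 0 r)) :=
        measure_mono (cap_subset_gph m hr54)
    _ ≤ ((3:ℝ≥0) : ℝ≥0∞)^(m:ℝ) *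
          μH[(m:ℝ)] ({y : En m | ‖y‖^2 ≤ 55/64} ∩ Metric.closedBall 0 r) :=
        ((gph_lipschitzOn m).mono Set.inter_subset_left).hausdorffMeasure_image_le
          (by positivity)
    _ ≤ (3:ℝ≥0∞)^m * μH[(m:ℝ)] (Metric.closedBall (0 : En m) r) := by
        rw [ENNReal.rpow_natCast]
        exact mul_le_mul_right (measure_mono Set.inter_subset_right) _
    _ = (3:ℝ≥0∞)^m * (ENNReal.ofReal (r ^ m) * μH[(m:ℝ)] (Metric.ball (0 : En m) 1)) := by
        rw [muH_cb m hr0]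

lemma capL (m : ℕ) {ρ : ℝ} (h0 : 0 < ρ) :
    0 < μSph (m+1) (Metric.closedBall (e1 (m+1)) ρ) := by
  set ρ' := min ρ (1/2) with hρ'
  have h0' : 0 < ρ' := lt_min h0 (by norm_num)
  have h2' : ρ' ≤ 1/2 := min_le_right _ _
  have hmono : Metric.closedBall (e1 (m+1)) ρ' ⊆ Metric.closedBall (e1 (m+1)) ρ :=
    Metric.closedBall_subset_closedBall (min_le_left _ _)
  refine lt_of_lt_of_le ?_ (measure_mono hmono)
  have hsub : gph m '' (Metric.closedBall 0 (ρ'/2)) ⊆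
      Metric.sphere (0 : En (m+1)) 1 ∩ Metric.closedBall (e1 (m+1)) ρ' := by
    rintro _ ⟨y, hy, rfl⟩
    rw [Metric.mem_closedBall, dist_zero_right] at hy
    have ht1 : ‖y‖ ≤ 1 := by linarith
    have ht0 : (0:ℝ) ≤ ‖y‖ := norm_nonneg y
    constructor
    · simpa using norm_gph y ht1
    · rw [Metric.mem_closedBall, dist_comm, dist_eq_norm]
      have h1 : 0 ≤ 1 - ‖y‖^2 := by nlinarith
      have hle1 : Real.sqrt (1 - ‖y‖^2) ≤ 1 := Real.sqrt_le_one.mpr (by nlinarith)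
      have hsqrt : 1 - ‖y‖^2 ≤ Real.sqrt (1 - ‖y‖^2) := by
        nlinarith [Real.sq_sqrt h1, Real.sqrt_nonneg (1 - ‖y‖^2),
          mul_nonneg (Real.sqrt_nonneg (1 - ‖y‖^2)) (sub_nonneg.mpr hle1)]
      have hnormsq : ‖e1 (m+1) - gph m y‖^2
          = (1 - Real.sqrt (1 - ‖y‖^2))^2 + ‖y‖^2 := by
        rw [e1_sub_normsq, gph_zero, prj_gph]
      have e3 : 1 - Real.sqrt (1 - ‖y‖^2) ≤ ‖y‖^2 := by linarith
      have e4 : 0 ≤ 1 - Real.sqrt (1 - ‖y‖^2) := by linarith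
      have hb : ‖e1 (m+1) - gph m y‖^2 ≤ ρ'^2 := by
        rw [hnormsq]
        nlinarith [e3, e4, ht1, ht0, hy, h0']
      nlinarith [norm_nonneg (e1 (m+1) - gph m y)]
  have h1 : μH[(m:ℝ)] (Metric.closedBall (0 : En m) (ρ'/2))
      ≤ μH[(m:ℝ)] (gph m '' (Metric.closedBall 0 (ρ'/2))) := by
    have hsub2 : Metric.closedBall (0 : En m) (ρ'/2)
        ⊆ prj m '' (gph m '' (Metric.closedBall 0 (ρ'/2))) := by
      intro y hy
      exact ⟨gph m y, Set.mem_image_of_mem _ hy, prj_gph y⟩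
    calc μH[(m:ℝ)] (Metric.closedBall (0 : En m) (ρ'/2))
        ≤ μH[(m:ℝ)] (prj m '' (gph m '' (Metric.closedBall 0 (ρ'/2)))) := measure_mono hsub2
      _ ≤ ((1:ℝ≥0) : ℝ≥0∞)^(m:ℝ) * μH[(m:ℝ)] (gph m '' (Metric.closedBall 0 (ρ'/2))) :=
          (prj_lipschitz m).hausdorffMeasure_image_le (by positivity) _
      _ = μH[(m:ℝ)] (gph m '' (Metric.closedBall 0 (ρ'/2))) := by simp
  have h2 := measure_mono (μ := (μH[(m:ℝ)] : Measure (En (m+1)))) hsub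
  rw [muSph_eq, Measure.restrict_apply measurableSet_closedBall, Set.inter_comm]
  exact lt_of_lt_of_le (muH_cb_pos m (by linarith)) (le_trans h1 h2)

end WPaux

namespace WPaux

lemma cap_reflect (m : ℕ) {p : En (m+1)} (hp : ‖p‖ = 1) (r : ℝ) :
    μH[(m:ℝ)] (Metric.sphere (0 : En (m+1)) 1 ∩ Metric.closedBall p r)
      = μH[(m:ℝ)] (Metric.sphere (0 : En (m+1)) 1 ∩ Metric.closedBall (e1 (m+1)) r) := by
  set R := Submodule.reflection (ℝ ∙ (e1 (m+1) - p))ᗮ with hR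
  have hRe1 : R (e1 (m+1)) = p := Submodule.reflection_sub (by rw [norm_e1, hp])
  have himg : R '' (Metric.sphere (0 : En (m+1)) 1 ∩ Metric.closedBall (e1 (m+1)) r)
      = Metric.sphere (0 : En (m+1)) 1 ∩ Metric.closedBall p r := by
    ext z
    constructor
    · rintro ⟨a, ⟨ha1, ha2⟩, rfl⟩
      refine ⟨?_, ?_⟩
      · simp only [mem_sphere_iff_norm, sub_zero] at ha1 ⊢
        rw [R.norm_map]; exact ha1
      · rw [Metric.mem_closedBall] at ha2 ⊢
        rw [← hRe1, R.dist_map]; exact ha2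
    · rintro ⟨hz1, hz2⟩
      refine ⟨R.symm z, ⟨?_, ?_⟩, R.apply_symm_apply z⟩
      · simp only [mem_sphere_iff_norm, sub_zero] at hz1 ⊢
        rw [R.symm.norm_map]; exact hz1
      · rw [Metric.mem_closedBall] at hz2 ⊢
        have : dist (R.symm z) (e1 (m+1)) = dist z p := by
          rw [← hRe1, ← R.dist_map, R.apply_symm_apply]
        rw [this]; exact hz2
  rw [← himg]
  exact R.toIsometryEquiv.hausdorffMeasure_image _ _

lemma muSph_univ_lt_top (m : ℕ) : μSph (m+1) Set.univ < ∞ := by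
  rw [muSph_eq, Measure.restrict_apply_univ]
  have hs : IsCompact (Metric.sphere (0 : En (m+1)) 1) := isCompact_sphere _ _
  have hcov : Metric.sphere (0 : En (m+1)) 1
      ⊆ ⋃ p ∈ Metric.sphere (0 : En (m+1)) 1, Metric.ball p 1 := by
    intro x hx
    exact Set.mem_biUnion hx (Metric.mem_ball_self one_pos)
  obtain ⟨t, hts, htf, htc⟩ := hs.elim_finite_subcover_image
    (fun p _ => Metric.isOpen_ball) hcov
  have hsub : Metric.sphere (0 : En (m+1)) 1
      ⊆ ⋃ p ∈ htf.toFinset, Metric.sphere (0 : En (m+1)) 1 ∩ Metric.closedBall p 1 := by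
    intro x hx
    obtain ⟨p, hp, hxp⟩ := Set.mem_iUnion₂.1 (htc hx)
    exact Set.mem_iUnion₂.2 ⟨p, htf.mem_toFinset.2 hp,
      ⟨hx, Metric.ball_subset_closedBall hxp⟩⟩
  calc μH[(m:ℝ)] (Metric.sphere (0 : En (m+1)) 1)
      ≤ ∑ p ∈ htf.toFinset,
          μH[(m:ℝ)] (Metric.sphere (0 : En (m+1)) 1 ∩ Metric.closedBall p 1) :=
        le_trans (measure_mono hsub) (measure_biUnion_finset_le _ _)
    _ < ∞ := by
        refine ENNReal.sum_lt_top.2 fun p hp => ?_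
        have hp1 : ‖p‖ = 1 := by
          have := hts (htf.mem_toFinset.1 hp)
          simpa using this
        rw [cap_reflect m hp1]
        have h1 : μH[(m:ℝ)] (Metric.sphere (0 : En (m+1)) 1 ∩ Metric.closedBall (e1 (m+1)) 1)
            ≤ (3:ℝ≥0∞)^m * (ENNReal.ofReal ((1:ℝ) ^ m) * μH[(m:ℝ)] (Metric.ball (0 : En m) 1)) := by
          have := capU m (r := 1) zero_le_one (by norm_num)
          rwa [muSph_eq, Measure.restrict_apply measurableSet_closedBall, Set.inter_comm] at this
        refine lt_of_le_of_lt h1 ?_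
        refine ENNReal.mul_lt_top (ENNReal.pow_lt_top (n := m) ENNReal.coe_lt_top)
          (ENNReal.mul_lt_top ENNReal.ofReal_lt_top ?_)
        exact lt_of_le_of_lt (measure_mono Metric.ball_subset_closedBall) (muH_cb_lt_top m 1)

instance (m : ℕ) : IsFiniteMeasure (μSph (m+1)) :=
  ⟨muSph_univ_lt_top m⟩

end WPaux

namespace WPaux

section Analytic

variable {m : ℕ} {f : En (m+1) → ℝ} {M : ℝ}

/-- The inner integral of `cNorm`. -/
def Iint (m : ℕ) (f : En (m+1) → ℝ) (τ : ℝ) : ℝ :=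
  ∫ ν, (f ((Real.sqrt τ)⁻¹ • (e1 (m+1) - ν))) ^ 2 ∂μSph (m+1)

lemma cNorm_eq (τ : ℝ) : cNorm (m+1) f τ = (Iint m f τ) ^ (-(1:ℝ)/2) := rfl

lemma Iint_integrable (hf : Continuous f) (hM : ∀ x, ‖f x‖ ≤ M) (τ : ℝ) :
    Integrable (fun ν => (f ((Real.sqrt τ)⁻¹ • (e1 (m+1) - ν))) ^ 2) (μSph (m+1)) := by
  refine (integrable_const (M^2)).mono' ?_ ?_
  · exact Continuous.aestronglyMeasurable (by fun_prop)
  · refine Filter.Eventually.of_forall fun ν => ?_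
    have h := hM ((Real.sqrt τ)⁻¹ • (e1 (m+1) - ν))
    rw [Real.norm_eq_abs] at h ⊢
    rw [abs_pow]
    have hM0 : 0 ≤ M := le_trans (abs_nonneg _) h
    calc |f _| ^ 2 ≤ M ^ 2 := by
          apply pow_le_pow_left₀ (abs_nonneg _) h
      _ ≤ |M ^ 2| := le_abs_self _
      _ ≤ M ^ 2 := le_of_eq (abs_of_nonneg (by positivity))

lemma Iint_nonneg (τ : ℝ) : 0 ≤ Iint m f τ :=
  integral_nonneg fun ν => sq_nonneg _

lemma smul_norm_eq {c : ℝ} (hc : 0 < c) (x : En (m+1)) : ‖c⁻¹ • x‖ = c⁻¹ * ‖x‖ := by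
  rw [norm_smul, Real.norm_eq_abs, abs_of_pos (inv_pos.2 hc)]

/-- Lower bound for `Iint` by the measure of a cap. -/
lemma Iint_ge_cap (hf : Continuous f) (hM : ∀ x, ‖f x‖ ≤ M)
    (hone : ∀ x : En (m+1), ‖x‖ ≤ 3/4 → f x = 1)
    {τ ρ : ℝ} (hτ : 0 < τ) (hρ : ρ ≤ (3/4) * Real.sqrt τ) :
    (μSph (m+1) (Metric.closedBall (e1 (m+1)) ρ)).toReal ≤ Iint m f τ := by
  have hst : 0 < Real.sqrt τ := Real.sqrt_pos.2 hτ
  have hpt : ∀ ν, Set.indicator (Metric.closedBall (e1 (m+1)) ρ) (fun _ => (1:ℝ)) ν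
      ≤ (f ((Real.sqrt τ)⁻¹ • (e1 (m+1) - ν))) ^ 2 := by
    intro ν
    by_cases hν : ν ∈ Metric.closedBall (e1 (m+1)) ρ
    · rw [Set.indicator_of_mem hν]
      have hd : ‖e1 (m+1) - ν‖ ≤ ρ := by
        rw [Metric.mem_closedBall, dist_comm, dist_eq_norm] at hν; exact hν
      have harg : ‖(Real.sqrt τ)⁻¹ • (e1 (m+1) - ν)‖ ≤ 3/4 := by
        rw [smul_norm_eq hst]
        rw [inv_mul_le_iff₀ hst]
        calc ‖e1 (m+1) - ν‖ ≤ ρ := hd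
          _ ≤ (3/4) * Real.sqrt τ := hρ
          _ = Real.sqrt τ * (3/4) := by ring
      rw [hone _ harg]; norm_num
    · rw [Set.indicator_of_notMem hν]; exact sq_nonneg _
  have hind : Integrable (Set.indicator (Metric.closedBall (e1 (m+1)) ρ)
      (fun _ => (1:ℝ))) (μSph (m+1)) :=
    (integrable_const (1:ℝ)).indicator measurableSet_closedBall
  have := integral_mono hind (Iint_integrable hf hM τ) hpt
  rwa [integral_indicator_const _ measurableSet_closedBall, smul_eq_mul, mul_one] at this

lemma Iint_pos (hf : Continuous f) (hM : ∀ x, ‖f x‖ ≤ M)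
    (hone : ∀ x : En (m+1), ‖x‖ ≤ 3/4 → f x = 1) {τ : ℝ} (hτ : 0 < τ) :
    0 < Iint m f τ := by
  have hst : 0 < Real.sqrt τ := Real.sqrt_pos.2 hτ
  have h := Iint_ge_cap hf hM hone hτ (le_refl ((3/4) * Real.sqrt τ))
  refine lt_of_lt_of_le ?_ h
  refine ENNReal.toReal_pos (ne_of_gt (capL m (by positivity))) ?_
  exact ne_of_lt (measure_lt_top _ _)

/-- Upper bound for `Iint`. -/
lemma Iint_le (hf : Continuous f) (hM : ∀ x, ‖f x‖ ≤ M)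
    (hsupp : ∀ x : En (m+1), (1:ℝ) < ‖x‖ → f x = 0)
    {τ : ℝ} (hτ : 0 < τ) (hτ54 : τ ≤ 5/4) :
    Iint m f τ ≤ M^2 * ((3:ℝ)^m * (Real.sqrt τ)^m
      * (μH[(m:ℝ)] (Metric.ball (0 : En m) 1)).toReal) := by
  have hst : 0 < Real.sqrt τ := Real.sqrt_pos.2 hτ
  have hM0 : 0 ≤ M := le_trans (norm_nonneg _) (hM 0)
  -- pointwise bound
  have hpt : ∀ ν, (f ((Real.sqrt τ)⁻¹ • (e1 (m+1) - ν))) ^ 2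
      ≤ Set.indicator (Metric.closedBall (e1 (m+1)) (Real.sqrt τ)) (fun _ => M^2) ν := by
    intro ν
    by_cases hν : ν ∈ Metric.closedBall (e1 (m+1)) (Real.sqrt τ)
    · rw [Set.indicator_of_mem hν]
      have h := hM ((Real.sqrt τ)⁻¹ • (e1 (m+1) - ν))
      rw [Real.norm_eq_abs] at h
      calc (f _)^2 = |f _|^2 := (sq_abs _).symm
        _ ≤ M^2 := pow_le_pow_left₀ (abs_nonneg _) h 2
    · rw [Set.indicator_of_notMem hν]
      have hd : Real.sqrt τ < ‖e1 (m+1) - ν‖ := by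
        rw [Metric.mem_closedBall, dist_comm, dist_eq_norm, not_le] at hν; exact hν
      have harg : (1:ℝ) < ‖(Real.sqrt τ)⁻¹ • (e1 (m+1) - ν)‖ := by
        rw [smul_norm_eq hst]
        rw [lt_inv_mul_iff₀ hst]
        simpa using hd
      rw [hsupp _ harg]; norm_num
  have hind : Integrable (Set.indicator (Metric.closedBall (e1 (m+1)) (Real.sqrt τ))
      (fun _ => M^2)) (μSph (m+1)) :=
    (integrable_const (M^2)).indicator measurableSet_closedBall
  have h1 := integral_mono (Iint_integrable hf hM τ) hind hpt
  rw [integral_indicator_const _ measurableSet_closedBall, smul_eq_mul] at h1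
  refine le_trans h1 ?_
  -- cap measure bound
  have h2 := capU m (r := Real.sqrt τ) hst.le (by rw [Real.sq_sqrt hτ.le]; linarith)
  have hfin : (3:ℝ≥0∞)^m * (ENNReal.ofReal ((Real.sqrt τ) ^ m)
      * μH[(m:ℝ)] (Metric.ball (0 : En m) 1)) ≠ ∞ := by
    refine ne_of_lt (ENNReal.mul_lt_top (ENNReal.pow_lt_top (n := m) ENNReal.coe_lt_top)
      (ENNReal.mul_lt_top ENNReal.ofReal_lt_top ?_))
    exact lt_of_le_of_lt (measure_mono Metric.ball_subset_closedBall) (muH_cb_lt_top m 1)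
  have h3 := ENNReal.toReal_mono hfin h2
  rw [ENNReal.toReal_mul, ENNReal.toReal_mul, ENNReal.toReal_ofReal (by positivity),
    ENNReal.toReal_pow] at h3
  have h4 : ((3:ℝ≥0∞)).toReal = (3:ℝ) := by simp
  rw [h4] at h3
  calc (μSph (m+1) (Metric.closedBall (e1 (m+1)) (Real.sqrt τ))).toReal * M^2
      ≤ (3:ℝ)^m * ((Real.sqrt τ)^m
        * (μH[(m:ℝ)] (Metric.ball (0 : En m) 1)).toReal) * M^2 := by
        apply mul_le_mul_of_nonneg_right h3 (by positivity)
    _ = M^2 * ((3:ℝ)^m * (Real.sqrt τ)^m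
        * (μH[(m:ℝ)] (Metric.ball (0 : En m) 1)).toReal) := by ring

end Analytic

end WPaux

namespace WPaux

section Analytic2

variable {m : ℕ} {f : En (m+1) → ℝ} {M : ℝ}

lemma Iint_continuousAt (hf : Continuous f) (hM : ∀ x, ‖f x‖ ≤ M)
    {τ₀ : ℝ} (hτ₀ : 0 < τ₀) : ContinuousAt (Iint m f) τ₀ := by
  refine continuousAt_of_dominated ?_ ?_ ?_ ?_
    (bound := fun _ => M^2)
  · refine Filter.Eventually.of_forall fun τ => ?_
    exact Continuous.aestronglyMeasurable (by fun_prop)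
  · refine Filter.Eventually.of_forall fun τ => ?_
    refine Filter.Eventually.of_forall fun ν => ?_
    have h := hM ((Real.sqrt τ)⁻¹ • (e1 (m+1) - ν))
    rw [Real.norm_eq_abs] at h
    rw [Real.norm_eq_abs, abs_pow]
    calc |f _|^2 ≤ M^2 := pow_le_pow_left₀ (abs_nonneg _) h 2
      _ = M^2 := rfl
  · exact integrable_const _
  · refine Filter.Eventually.of_forall fun ν => ?_
    have hsc : ContinuousAt (fun τ : ℝ => (Real.sqrt τ)⁻¹ • (e1 (m+1) - ν)) τ₀ := by
      refine ContinuousAt.smul (f := fun τ : ℝ => (Real.sqrt τ)⁻¹)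
        (g := fun _ : ℝ => e1 (m+1) - ν) ?_ continuousAt_const
      exact (Real.continuous_sqrt.continuousAt).inv₀ (ne_of_gt (Real.sqrt_pos.2 hτ₀))
    exact ((hf.continuousAt.comp hsc).pow 2)

lemma cNorm_continuousAt (hf : Continuous f) (hM : ∀ x, ‖f x‖ ≤ M)
    (hone : ∀ x : En (m+1), ‖x‖ ≤ 3/4 → f x = 1)
    {τ₀ : ℝ} (hτ₀ : 0 < τ₀) : ContinuousAt (cNorm (m+1) f) τ₀ := by
  have h1 : ContinuousAt (fun x : ℝ => x ^ (-(1:ℝ)/2)) (Iint m f τ₀) :=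
    Real.continuousAt_rpow_const _ _ (Or.inl (ne_of_gt (Iint_pos hf hM hone hτ₀)))
  exact h1.comp (Iint_continuousAt hf hM hτ₀)

lemma cNorm_nonneg' (τ : ℝ) : 0 ≤ cNorm (m+1) f τ := by
  rw [cNorm_eq]
  exact Real.rpow_nonneg (Iint_nonneg τ) _

lemma cNorm_le (hf : Continuous f) (hM : ∀ x, ‖f x‖ ≤ M)
    (hone : ∀ x : En (m+1), ‖x‖ ≤ 3/4 → f x = 1)
    {a τ : ℝ} (ha : 0 < a) (haτ : a ≤ τ) :
    cNorm (m+1) f τ ≤ ((μSph (m+1) (Metric.closedBall (e1 (m+1))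
      ((3/4) * Real.sqrt a))).toReal) ^ (-(1:ℝ)/2) := by
  have hτ : 0 < τ := lt_of_lt_of_le ha haτ
  have h1 : (μSph (m+1) (Metric.closedBall (e1 (m+1)) ((3/4) * Real.sqrt a))).toReal
      ≤ Iint m f τ := by
    refine Iint_ge_cap hf hM hone hτ ?_
    have := Real.sqrt_le_sqrt haτ
    linarith
  have h0 : 0 < (μSph (m+1) (Metric.closedBall (e1 (m+1)) ((3/4) * Real.sqrt a))).toReal := by
    refine ENNReal.toReal_pos (ne_of_gt (capL m ?_)) (ne_of_lt (measure_lt_top _ _))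
    have := Real.sqrt_pos.2 ha
    positivity
  rw [cNorm_eq]
  exact Real.rpow_le_rpow_of_nonpos h0 h1 (by norm_num)

lemma cNorm_ge (hf : Continuous f) (hM : ∀ x, ‖f x‖ ≤ M)
    (hsupp : ∀ x : En (m+1), (1:ℝ) < ‖x‖ → f x = 0)
    (hone : ∀ x : En (m+1), ‖x‖ ≤ 3/4 → f x = 1)
    {τ : ℝ} (hτ : 0 < τ) (hτ54 : τ ≤ 5/4) :
    (M^2 * ((3:ℝ)^m * (μH[(m:ℝ)] (Metric.ball (0 : En m) 1)).toReal)) ^ (-(1:ℝ)/2)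
      * τ ^ (-(m:ℝ)/4) ≤ cNorm (m+1) f τ := by
  have hI := Iint_le hf hM hsupp hτ hτ54
  have hIpos := Iint_pos hf hM hone hτ
  set Br := (μH[(m:ℝ)] (Metric.ball (0 : En m) 1)).toReal with hBr
  have hM0 : 0 ≤ M := le_trans (norm_nonneg _) (hM 0)
  have hBr0 : 0 ≤ Br := ENNReal.toReal_nonneg
  rw [cNorm_eq]
  have h2 : Iint m f τ ≤ (M^2 * ((3:ℝ)^m * Br)) * (Real.sqrt τ)^m := by
    calc Iint m f τ ≤ M^2 * ((3:ℝ)^m * (Real.sqrt τ)^m * Br) := hI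
      _ = (M^2 * ((3:ℝ)^m * Br)) * (Real.sqrt τ)^m := by ring
  have h3 := Real.rpow_le_rpow_of_nonpos hIpos h2 (by norm_num : (-(1:ℝ)/2) ≤ 0)
  refine le_trans (le_of_eq ?_) h3
  have hsτ : (0:ℝ) ≤ Real.sqrt τ := Real.sqrt_nonneg τ
  have e1' : ((Real.sqrt τ)^m : ℝ) ^ (-(1:ℝ)/2) = τ ^ (-(m:ℝ)/4) := by
    rw [← Real.rpow_natCast (Real.sqrt τ) m, Real.sqrt_eq_rpow,
      ← Real.rpow_mul hτ.le, ← Real.rpow_mul hτ.le]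
    congr 1
    ring
  conv_rhs => rw [Real.mul_rpow (by positivity) (by positivity)]
  rw [e1']

end Analytic2

end WPaux

namespace WPaux

section Analytic3

variable {m : ℕ} {f g : En (m+1) → ℝ} {M Mg : ℝ}

lemma PsiS_eq (τ : ℝ) (ζ : En (m+1)) : PsiS (m+1) g τ ζ = g (τ • ζ) := rfl

lemma psi_integrand_nonneg' (hf : ∀ x, 0 ≤ f x) (hg : ∀ x, 0 ≤ g x)
    (ν ζ : En (m+1)) {τ : ℝ} (hτ : 0 < τ) :
    0 ≤ PsiS (m+1) g τ ζ * phiOS (m+1) f ν τ ζ * τ⁻¹ := by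
  refine mul_nonneg (mul_nonneg (hg _) ?_) (by positivity)
  unfold phiOS
  split
  · exact le_refl 0
  · exact mul_nonneg (cNorm_nonneg' _) (hf _)

lemma psi_integrableOn (hf : Continuous f) (hM : ∀ x, ‖f x‖ ≤ M)
    (hfone : ∀ x : En (m+1), ‖x‖ ≤ 3/4 → f x = 1)
    (hg : Continuous g) (hMg : ∀ x, ‖g x‖ ≤ Mg)
    (hgsupp : ∀ x : En (m+1), ‖x‖ ∉ Set.Icc (1/2 : ℝ) 2 → g x = 0)
    (ν : En (m+1)) {ζ : En (m+1)} (hζ : ζ ≠ 0) :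
    IntegrableOn (fun τ => PsiS (m+1) g τ ζ * phiOS (m+1) f ν τ ζ * τ⁻¹)
      (Set.Ioo (0:ℝ) 4) volume := by
  have hζn : 0 < ‖ζ‖ := norm_pos_iff.2 hζ
  set a : ℝ := min (1/(2*‖ζ‖)) 4 with ha_def
  have ha : 0 < a := lt_min (by positivity) (by norm_num)
  set P : ℝ := (μSph (m+1) (Metric.closedBall (e1 (m+1)) ((3/4) * Real.sqrt a))).toReal
    with hP_def
  have hP0 : 0 < P := by
    refine ENNReal.toReal_pos (ne_of_gt (capL m ?_)) (ne_of_lt (measure_lt_top _ _))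
    have := Real.sqrt_pos.2 ha
    positivity
  have hM0 : 0 ≤ M := le_trans (norm_nonneg _) (hM 0)
  have hMg0 : 0 ≤ Mg := le_trans (norm_nonneg _) (hMg 0)
  set Q : ℝ := Mg * (P^(-(1:ℝ)/2) * M) * a⁻¹ with hQ_def
  have hQ0 : 0 ≤ Q := by
    have : (0:ℝ) ≤ P^(-(1:ℝ)/2) := Real.rpow_nonneg hP0.le _
    positivity
  have hbound : ∀ τ ∈ Set.Ioo (0:ℝ) 4,
      ‖PsiS (m+1) g τ ζ * phiOS (m+1) f ν τ ζ * τ⁻¹‖ ≤ Q := by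
    rintro τ ⟨hτ0, hτ4⟩
    rcases lt_or_ge τ a with hlt | hge
    · have hz : g (τ • ζ) = 0 := by
        refine hgsupp _ ?_
        rw [norm_smul, Real.norm_eq_abs, abs_of_pos hτ0]
        intro hmem
        have h1 : τ * ‖ζ‖ < 1/2 := by
          have h2 : τ < 1/(2*‖ζ‖) := lt_of_lt_of_le hlt (min_le_left _ _)
          calc τ * ‖ζ‖ < (1/(2*‖ζ‖)) * ‖ζ‖ := by
                exact mul_lt_mul_of_pos_right h2 hζn
            _ = 1/2 := by field_simp
        exact absurd hmem.1 (by linarith)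
      rw [PsiS_eq, hz, zero_mul, zero_mul, norm_zero]
      exact hQ0
    · have h1 : |g (τ • ζ)| ≤ Mg := by rw [← Real.norm_eq_abs]; exact hMg _
      have h2 : |phiOS (m+1) f ν τ ζ| ≤ P^(-(1:ℝ)/2) * M := by
        rw [phiOS, if_neg hζ, abs_mul, abs_of_nonneg (cNorm_nonneg' τ)]
        refine mul_le_mul (cNorm_le hf hM hfone ha hge) ?_ (abs_nonneg _)
          (Real.rpow_nonneg hP0.le _)
        rw [← Real.norm_eq_abs]; exact hM _
      have h3 : |τ⁻¹| ≤ a⁻¹ := by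
        rw [abs_of_pos (inv_pos.2 hτ0)]
        exact inv_anti₀ ha hge
      rw [Real.norm_eq_abs, abs_mul, abs_mul]
      exact mul_le_mul (mul_le_mul h1 h2 (abs_nonneg _) hMg0) h3 (abs_nonneg _)
        (by positivity)
  have hFeq : Set.EqOn (fun τ => PsiS (m+1) g τ ζ * phiOS (m+1) f ν τ ζ * τ⁻¹)
      (fun τ => g (τ • ζ) * (cNorm (m+1) f τ
        * f ((Real.sqrt τ)⁻¹ • (‖ζ‖⁻¹ • ζ - ν))) * τ⁻¹) (Set.Ioo (0:ℝ) 4) := by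
    intro τ _
    simp only [PsiS, phiOS, if_neg hζ]
  have hcont : ContinuousOn (fun τ => PsiS (m+1) g τ ζ * phiOS (m+1) f ν τ ζ * τ⁻¹)
      (Set.Ioo (0:ℝ) 4) := by
    refine ContinuousOn.congr ?_ hFeq
    refine ContinuousOn.mul (ContinuousOn.mul ?_ (ContinuousOn.mul ?_ ?_)) ?_
    · exact (hg.comp (continuous_id.smul continuous_const)).continuousOn
    · intro τ hτ
      exact (cNorm_continuousAt hf hM hfone hτ.1).continuousWithinAt
    · intro τ hτ
      refine ContinuousAt.continuousWithinAt ?_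
      refine (hf.continuousAt.comp ?_)
      refine ContinuousAt.smul (f := fun τ : ℝ => (Real.sqrt τ)⁻¹)
        (g := fun _ : ℝ => ‖ζ‖⁻¹ • ζ - ν) ?_ continuousAt_const
      exact (Real.continuous_sqrt.continuousAt).inv₀ (ne_of_gt (Real.sqrt_pos.2 hτ.1))
    · intro τ hτ
      exact (continuousAt_inv₀ (ne_of_gt hτ.1)).continuousWithinAt
  refine Integrable.mono' (g := fun _ => Q) ?_ ?_ ?_
  · exact integrableOn_const (by rw [Real.volume_Ioo]; exact ENNReal.ofReal_ne_top)
  · exact hcont.aestronglyMeasurable measurableSet_Ioo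
  · exact (ae_restrict_iff' measurableSet_Ioo).2 (Filter.Eventually.of_forall hbound)

end Analytic3

end WPaux

namespace WPaux

lemma sqrt_const_mul (c σ : ℝ) (hc : 0 ≤ c) :
    Real.sqrt (c^2 * σ) = c * Real.sqrt σ := by
  rw [Real.sqrt_mul (by positivity) σ, Real.sqrt_sq hc]

lemma theta_support_subset {m : ℕ} (φ Ψ : En (m+1) → ℝ)
    (hΨ_supp : ∀ ζ : En (m+1), ‖ζ‖ ∉ Set.Icc (4/5 : ℝ) (5/4 : ℝ) → Ψ ζ = 0)
    (hφ_supp : ∀ ζ : En (m+1), (1 : ℝ)/4 < ‖ζ‖ → φ ζ = 0)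
    (ω : En (m+1)) {σ : ℝ} (hσ0 : 0 < σ) :
    ∀ ζ ∈ tsupport (theta (m+1) φ Ψ ω σ),
      4/(5*σ) ≤ ‖ζ‖ ∧ ‖ζ‖ ≤ 5/(4*σ) ∧
        ‖ζ - ‖ζ‖ • ω‖ ≤ (5/16) * Real.sqrt σ * ‖ζ‖ := by
  set S := {ζ : En (m+1) | 4/(5*σ) ≤ ‖ζ‖ ∧ ‖ζ‖ ≤ 5/(4*σ) ∧
    ‖ζ - ‖ζ‖ • ω‖ ≤ (5/16) * Real.sqrt σ * ‖ζ‖} with hS_def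
  have hSclosed : IsClosed S := by
    have h1 : IsClosed {ζ : En (m+1) | 4/(5*σ) ≤ ‖ζ‖} :=
      isClosed_le continuous_const continuous_norm
    have h2 : IsClosed {ζ : En (m+1) | ‖ζ‖ ≤ 5/(4*σ)} :=
      isClosed_le continuous_norm continuous_const
    have h3 : IsClosed {ζ : En (m+1) | ‖ζ - ‖ζ‖ • ω‖ ≤ (5/16) * Real.sqrt σ * ‖ζ‖} :=
      isClosed_le ((continuous_id.sub (continuous_norm.smul continuous_const)).norm)
        (continuous_const.mul continuous_norm)
    exact h1.inter (h2.inter h3)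
  have hsupp : Function.support (theta (m+1) φ Ψ ω σ) ⊆ S := by
    intro ζ hζ
    by_contra hnS
    apply hζ
    show PsiS (m+1) Ψ σ ζ * phiO (m+1) φ Ψ ω ζ = 0
    by_cases hA : 4/(5*σ) ≤ ‖ζ‖
    swap
    · push_neg at hA
      have hz : Ψ (σ • ζ) = 0 := by
        refine hΨ_supp _ ?_
        rw [norm_smul, Real.norm_eq_abs, abs_of_pos hσ0]
        intro hmem
        have : σ * ‖ζ‖ < 4/5 := by
          have h' := (lt_div_iff₀ (by positivity : (0:ℝ) < 5*σ)).1 hA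
          nlinarith
        linarith [hmem.1]
      rw [PsiS_eq, hz, zero_mul]
    by_cases hB : ‖ζ‖ ≤ 5/(4*σ)
    swap
    · push_neg at hB
      have hz : Ψ (σ • ζ) = 0 := by
        refine hΨ_supp _ ?_
        rw [norm_smul, Real.norm_eq_abs, abs_of_pos hσ0]
        intro hmem
        have : 5/4 < σ * ‖ζ‖ := by
          have h' := (div_lt_iff₀ (by positivity : (0:ℝ) < 4*σ)).1 hB
          nlinarith
        linarith [hmem.2]
      rw [PsiS_eq, hz, zero_mul]
    have hC : ¬ (‖ζ - ‖ζ‖ • ω‖ ≤ (5/16) * Real.sqrt σ * ‖ζ‖) := by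
      intro hc
      exact hnS ⟨hA, hB, hc⟩
    push_neg at hC
    have hζn : 0 < ‖ζ‖ := lt_of_lt_of_le (by positivity) hA
    have hζ0 : ζ ≠ 0 := by
      intro h; rw [h, norm_zero] at hζn; exact lt_irrefl _ hζn
    have hσs : 0 < Real.sqrt σ := Real.sqrt_pos.2 hσ0
    -- the unit direction is far from ω
    have hkey : ‖ζ‖⁻¹ • ζ - ω = ‖ζ‖⁻¹ • (ζ - ‖ζ‖ • ω) := by
      rw [smul_sub, smul_smul, inv_mul_cancel₀ (ne_of_gt hζn), one_smul]
    have hfar : (5/16) * Real.sqrt σ < ‖‖ζ‖⁻¹ • ζ - ω‖ := by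
      rw [hkey, norm_smul, Real.norm_eq_abs, abs_of_pos (inv_pos.2 hζn)]
      rw [show (5/16) * Real.sqrt σ = ‖ζ‖⁻¹ * ((5/16) * Real.sqrt σ * ‖ζ‖) by
        field_simp]
      exact mul_lt_mul_of_pos_left hC (inv_pos.2 hζn)
    have hphiO : phiO (m+1) φ Ψ ω ζ = 0 := by
      refine setIntegral_eq_zero_of_forall_eq_zero fun τ hτ => ?_
      obtain ⟨hτ0, hτ4⟩ := hτ
      suffices h : psiOS (m+1) φ Ψ ω τ ζ = 0 by rw [h, zero_mul]
      by_cases hτζ : τ * ‖ζ‖ ∈ Set.Icc (4/5 : ℝ) (5/4 : ℝ)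
      swap
      · have hz : Ψ (τ • ζ) = 0 := by
          refine hΨ_supp _ ?_
          rwa [norm_smul, Real.norm_eq_abs, abs_of_pos hτ0]
        show PsiS (m+1) Ψ τ ζ * phiOS (m+1) φ ω τ ζ = 0
        rw [PsiS_eq, hz, zero_mul]
      · have hτub : τ ≤ (25/16) * σ := by
          have h1 : τ * ‖ζ‖ ≤ 5/4 := hτζ.2
          have h2 : 4 ≤ ‖ζ‖ * (5*σ) := (div_le_iff₀ (by positivity : (0:ℝ) < 5*σ)).1 hA
          nlinarith [mul_le_mul_of_nonneg_left h2 hτ0.le, mul_le_mul_of_nonneg_right h1 (by positivity : (0:ℝ) ≤ 5*σ)]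
        have hsτ : Real.sqrt τ ≤ (5/4) * Real.sqrt σ := by
          have : Real.sqrt τ ≤ Real.sqrt ((25/16) * σ) := Real.sqrt_le_sqrt hτub
          rwa [show (25/16 : ℝ) = (5/4)^2 by norm_num,
            sqrt_const_mul (5/4) σ (by norm_num)] at this
        have hτs : 0 < Real.sqrt τ := Real.sqrt_pos.2 hτ0
        have harg : (1:ℝ)/4 < ‖(Real.sqrt τ)⁻¹ • (‖ζ‖⁻¹ • ζ - ω)‖ := by
          rw [norm_smul, Real.norm_eq_abs, abs_of_pos (inv_pos.2 hτs)]
          have h5 : ((5/4) * Real.sqrt σ)⁻¹ ≤ (Real.sqrt τ)⁻¹ :=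
            inv_anti₀ hτs hsτ
          calc (1:ℝ)/4 = ((5/4) * Real.sqrt σ)⁻¹ * ((5/16) * Real.sqrt σ) := by
                field_simp; ring
            _ < ((5/4) * Real.sqrt σ)⁻¹ * ‖‖ζ‖⁻¹ • ζ - ω‖ := by
                exact mul_lt_mul_of_pos_left hfar (by positivity)
            _ ≤ (Real.sqrt τ)⁻¹ * ‖‖ζ‖⁻¹ • ζ - ω‖ := by
                exact mul_le_mul_of_nonneg_right h5 (norm_nonneg _)
        have hz : φ ((Real.sqrt τ)⁻¹ • (‖ζ‖⁻¹ • ζ - ω)) = 0 := hφ_supp _ harg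
        show PsiS (m+1) Ψ τ ζ * phiOS (m+1) φ ω τ ζ = 0
        rw [phiOS, if_neg hζ0, hz, mul_zero, mul_zero]
    rw [hphiO, mul_zero]
  intro ζ hζ
  exact closure_minimal hsupp hSclosed hζ

end WPaux

set_option maxHeartbeats 2000000 in
open WPaux in
theorem modified_wave_packet_lower_bound' (n : ℕ) (hn : 2 ≤ n)
    (φ Ψ : En n → ℝ)
    (hφ_supp : ∀ ζ : En n, (1 : ℝ) / 4 < ‖ζ‖ → φ ζ = 0)
    (hΨ_supp : ∀ ζ : En n, ‖ζ‖ ∉ Set.Icc (4 / 5 : ℝ) (5 / 4 : ℝ) → Ψ ζ = 0)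
    (φt Ψt : En n → ℝ)
    (hφt_sm : ContDiff ℝ (⊤ : ℕ∞) φt) (hφt_cs : HasCompactSupport φt)
    (hφt_nn : ∀ ζ, 0 ≤ φt ζ)
    (hφt_one : ∀ ζ : En n, ‖ζ‖ ≤ 3 / 4 → φt ζ = 1)
    (hφt_supp : ∀ ζ : En n, (1 : ℝ) < ‖ζ‖ → φt ζ = 0)
    (hΨt_sm : ContDiff ℝ (⊤ : ℕ∞) Ψt) (hΨt_cs : HasCompactSupport Ψt)
    (hΨt_nn : ∀ ζ, 0 ≤ Ψt ζ)
    (hΨt_one : ∀ ζ : En n, ‖ζ‖ ∈ Set.Icc (2 / 3 : ℝ) (3 / 2 : ℝ) → Ψt ζ = 1)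
    (hΨt_supp : ∀ ζ : En n, ‖ζ‖ ∉ Set.Icc (1 / 2 : ℝ) (2 : ℝ) → Ψt ζ = 0)
    : ∃ c : ℝ, 0 < c ∧
        ∀ ω ν : En n, ‖ω‖ = 1 → ‖ν‖ = 1 → ∀ σ : ℝ, 0 < σ → σ < 1 →
          ‖ω - ν‖ ≤ (1 / 16) * Real.sqrt σ →
          ∀ ζ ∈ tsupport (theta n φ Ψ ω σ),
            c * σ ^ (-((n : ℝ) - 1) / 4) ≤ theta n φt Ψt ν σ ζ ∧
              ‖‖ζ‖⁻¹ • ζ - ν‖ ≤ (3 / 8) * Real.sqrt σ := by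
  obtain ⟨m, rfl⟩ : ∃ m, n = m + 1 := ⟨n - 1, by omega⟩
  obtain ⟨M₀, hM₀⟩ := hφt_sm.continuous.bounded_above_of_compact_support hφt_cs
  set M : ℝ := max M₀ 1 with hM_def
  have hM : ∀ x, ‖φt x‖ ≤ M := fun x => le_trans (hM₀ x) (le_max_left _ _)
  have hM1 : (1:ℝ) ≤ M := le_max_right _ _
  obtain ⟨Mg, hMg⟩ := hΨt_sm.continuous.bounded_above_of_compact_support hΨt_cs
  set Br : ℝ := (μH[(m:ℝ)] (Metric.ball (0 : En m) 1)).toReal with hBr_def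
  have hBr0 : 0 < Br := by
    refine ENNReal.toReal_pos ?_ ?_
    · rw [muH_En_eq]
      exact ne_of_gt (Metric.measure_ball_pos _ _ one_pos)
    · exact ne_of_lt (lt_of_le_of_lt (measure_mono Metric.ball_subset_closedBall)
        (muH_cb_lt_top m 1))
  set C0 : ℝ := (M^2 * ((3:ℝ)^m * Br)) ^ (-(1:ℝ)/2) with hC0_def
  have hC0 : 0 < C0 := Real.rpow_pos_of_pos (by positivity) _
  set C1 : ℝ := C0 * ((11/10 : ℝ)) ^ (-(m:ℝ)/4) with hC1_def
  have hC1 : 0 < C1 := mul_pos hC0 (Real.rpow_pos_of_pos (by norm_num) _)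
  refine ⟨C1/11, by positivity, ?_⟩
  intro ω ν hω hν σ hσ0 hσ1 hων ζ hζsupp
  obtain ⟨hA, hB, hC⟩ := theta_support_subset φ Ψ hΨ_supp hφ_supp ω hσ0 ζ hζsupp
  have hσs : 0 < Real.sqrt σ := Real.sqrt_pos.2 hσ0
  have hζn : 0 < ‖ζ‖ := lt_of_lt_of_le (by positivity) hA
  have hζ0 : ζ ≠ 0 := fun h => by rw [h, norm_zero] at hζn; exact lt_irrefl _ hζn
  have h45 : 4/5 ≤ σ * ‖ζ‖ := by
    have h' := (div_le_iff₀ (by positivity : (0:ℝ) < 5*σ)).1 hA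
    nlinarith
  have h54 : σ * ‖ζ‖ ≤ 5/4 := by
    have h' := (le_div_iff₀ (by positivity : (0:ℝ) < 4*σ)).1 hB
    nlinarith
  have hkey : ‖ζ‖⁻¹ • ζ - ω = ‖ζ‖⁻¹ • (ζ - ‖ζ‖ • ω) := by
    rw [smul_sub, smul_smul, inv_mul_cancel₀ (ne_of_gt hζn), one_smul]
  have hzo : ‖‖ζ‖⁻¹ • ζ - ω‖ ≤ (5/16) * Real.sqrt σ := by
    rw [hkey, norm_smul, Real.norm_eq_abs, abs_of_pos (inv_pos.2 hζn)]
    calc ‖ζ‖⁻¹ * ‖ζ - ‖ζ‖ • ω‖ ≤ ‖ζ‖⁻¹ * ((5/16) * Real.sqrt σ * ‖ζ‖) :=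
          mul_le_mul_of_nonneg_left hC (by positivity)
      _ = (5/16) * Real.sqrt σ := by field_simp
  have hzv : ‖‖ζ‖⁻¹ • ζ - ν‖ ≤ (3/8) * Real.sqrt σ := by
    have htri : ‖‖ζ‖⁻¹ • ζ - ν‖ ≤ ‖‖ζ‖⁻¹ • ζ - ω‖ + ‖ω - ν‖ := by
      have : (‖ζ‖⁻¹ • ζ - ν : En (m+1)) = (‖ζ‖⁻¹ • ζ - ω) + (ω - ν) := by abel
      rw [this]; exact norm_add_le _ _
    calc ‖‖ζ‖⁻¹ • ζ - ν‖ ≤ (5/16) * Real.sqrt σ + (1/16) * Real.sqrt σ := by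
          refine le_trans htri (add_le_add hzo hων)
      _ = (3/8) * Real.sqrt σ := by ring
  refine ⟨?_, hzv⟩
  -- Ψt(σ•ζ) = 1
  have hΨt1 : PsiS (m+1) Ψt σ ζ = 1 := by
    rw [PsiS_eq]
    refine hΨt_one _ ?_
    rw [norm_smul, Real.norm_eq_abs, abs_of_pos hσ0]
    constructor <;> [linarith; linarith]
  have hthet : theta (m+1) φt Ψt ν σ ζ = phiO (m+1) φt Ψt ν ζ := by
    show PsiS (m+1) Ψt σ ζ * phiO (m+1) φt Ψt ν ζ = _
    rw [hΨt1, one_mul]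
  rw [hthet]
  have hint := psi_integrableOn hφt_sm.continuous hM hφt_one hΨt_sm.continuous hMg
    hΨt_supp ν hζ0
  have hIoc_sub : Set.Ioc σ ((11/10)*σ) ⊆ Set.Ioo (0:ℝ) 4 := by
    rintro τ ⟨h1, h2⟩
    exact ⟨lt_trans hσ0 h1, by nlinarith⟩
  have hnn : 0 ≤ᵐ[volume.restrict (Set.Ioo (0:ℝ) 4)]
      (fun τ => PsiS (m+1) Ψt τ ζ * phiOS (m+1) φt ν τ ζ * τ⁻¹) := by
    refine (ae_restrict_iff' measurableSet_Ioo).2 (Filter.Eventually.of_forall ?_)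
    intro τ hτ
    exact psi_integrand_nonneg' hφt_nn hΨt_nn ν ζ hτ.1
  have hmono : (∫ τ in Set.Ioc σ ((11/10)*σ),
        PsiS (m+1) Ψt τ ζ * phiOS (m+1) φt ν τ ζ * τ⁻¹)
      ≤ ∫ τ in Set.Ioo (0:ℝ) 4,
        PsiS (m+1) Ψt τ ζ * phiOS (m+1) φt ν τ ζ * τ⁻¹ :=
    setIntegral_mono_set hint hnn (HasSubset.Subset.eventuallyLE hIoc_sub)
  -- pointwise constant lower bound on the small interval
  set c' : ℝ := C1 * σ ^ (-(m:ℝ)/4) * ((11/10)*σ)⁻¹ with hc'_def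
  have hptIoc : ∀ τ ∈ Set.Ioc σ ((11/10)*σ),
      c' ≤ PsiS (m+1) Ψt τ ζ * phiOS (m+1) φt ν τ ζ * τ⁻¹ := by
    rintro τ ⟨hτ1, hτ2⟩
    have hτ0 : 0 < τ := lt_trans hσ0 hτ1
    have hτs : 0 < Real.sqrt τ := Real.sqrt_pos.2 hτ0
    -- Ψt(τ•ζ) = 1
    have hg1 : PsiS (m+1) Ψt τ ζ = 1 := by
      rw [PsiS_eq]
      refine hΨt_one _ ?_
      rw [norm_smul, Real.norm_eq_abs, abs_of_pos hτ0]
      constructor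
      · nlinarith
      · nlinarith
    -- φt(...) = 1
    have hf1 : φt ((Real.sqrt τ)⁻¹ • (‖ζ‖⁻¹ • ζ - ν)) = 1 := by
      refine hφt_one _ ?_
      rw [norm_smul, Real.norm_eq_abs, abs_of_pos (inv_pos.2 hτs)]
      have hss : Real.sqrt σ ≤ Real.sqrt τ := Real.sqrt_le_sqrt hτ1.le
      have hinv : (Real.sqrt τ)⁻¹ ≤ (Real.sqrt σ)⁻¹ := inv_anti₀ hσs hss
      calc (Real.sqrt τ)⁻¹ * ‖‖ζ‖⁻¹ • ζ - ν‖
          ≤ (Real.sqrt σ)⁻¹ * ((3/8) * Real.sqrt σ) := by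
            refine mul_le_mul hinv hzv (norm_nonneg _) (by positivity)
        _ = 3/8 := by field_simp
        _ ≤ 3/4 := by norm_num
    have hτ54 : τ ≤ 5/4 := by nlinarith
    have hcN := cNorm_ge hφt_sm.continuous hM hφt_supp hφt_one hτ0 hτ54
    rw [phiOS, if_neg hζ0, hg1, hf1, one_mul, mul_one]
    -- cNorm τ * τ⁻¹ ≥ c'
    have hτexp : ((11/10)*σ) ^ (-(m:ℝ)/4) ≤ τ ^ (-(m:ℝ)/4) :=
      Real.rpow_le_rpow_of_nonpos hτ0 hτ2
        (by rw [neg_div]; exact neg_nonpos.2 (by positivity))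
    have hmulexp : ((11/10)*σ) ^ (-(m:ℝ)/4)
        = (11/10 : ℝ) ^ (-(m:ℝ)/4) * σ ^ (-(m:ℝ)/4) :=
      Real.mul_rpow (by norm_num) hσ0.le
    have h1 : C1 * σ ^ (-(m:ℝ)/4) ≤ cNorm (m+1) φt τ := by
      calc C1 * σ ^ (-(m:ℝ)/4)
          = C0 * (((11/10):ℝ) ^ (-(m:ℝ)/4) * σ ^ (-(m:ℝ)/4)) := by
            rw [hC1_def]; ring
        _ = C0 * (((11/10)*σ) ^ (-(m:ℝ)/4)) := by rw [hmulexp]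
        _ ≤ C0 * τ ^ (-(m:ℝ)/4) := mul_le_mul_of_nonneg_left hτexp hC0.le
        _ ≤ cNorm (m+1) φt τ := hcN
    have h2 : ((11/10)*σ)⁻¹ ≤ τ⁻¹ := inv_anti₀ hτ0 hτ2
    calc c' = (C1 * σ ^ (-(m:ℝ)/4)) * ((11/10)*σ)⁻¹ := by rw [hc'_def]
      _ ≤ cNorm (m+1) φt τ * τ⁻¹ := by
          refine mul_le_mul h1 h2 (by positivity) ?_
          exact cNorm_nonneg' τ
  have hIocInt : IntegrableOn
      (fun τ => PsiS (m+1) Ψt τ ζ * phiOS (m+1) φt ν τ ζ * τ⁻¹)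
      (Set.Ioc σ ((11/10)*σ)) volume := hint.mono_set hIoc_sub
  have hconst := setIntegral_ge_of_const_le measurableSet_Ioc
    (by rw [Real.volume_Ioc]; exact ENNReal.ofReal_ne_top) hptIoc hIocInt
  have hvol : ((volume (Set.Ioc σ ((11/10)*σ))).toReal : ℝ) = σ/10 := by
    rw [Real.volume_Ioc, ENNReal.toReal_ofReal (by nlinarith)]
    ring
  rw [measureReal_def, hvol, smul_eq_mul, mul_comm (σ/10) c'] at hconst
  have hfinal : C1/11 * σ ^ (-(m:ℝ)/4) ≤ c' * (σ/10) := by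
    rw [hc'_def]
    have : C1 * σ ^ (-(m:ℝ)/4) * ((11/10)*σ)⁻¹ * (σ/10)
        = C1/11 * σ ^ (-(m:ℝ)/4) := by
      field_simp
    rw [this]
  have hexp : -(((m+1:ℕ) : ℝ) - 1)/4 = -(m:ℝ)/4 := by push_cast; ring
  rw [show ((m+1:ℕ) : ℝ) = (m:ℝ) + 1 by push_cast; ring]
  rw [show -((m:ℝ) + 1 - 1)/4 = -(m:ℝ)/4 by ring]
  calc C1/11 * σ ^ (-(m:ℝ)/4) ≤ c' * (σ/10) := hfinal
    _ ≤ ∫ τ in Set.Ioc σ ((11/10)*σ),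
        PsiS (m+1) Ψt τ ζ * phiOS (m+1) φt ν τ ζ * τ⁻¹ := hconst
    _ ≤ ∫ τ in Set.Ioo (0:ℝ) 4,
        PsiS (m+1) Ψt τ ζ * phiOS (m+1) φt ν τ ζ * τ⁻¹ := hmono
    _ = phiO (m+1) φt Ψt ν ζ := rfl


/-- lower bound for the modified wave packet: `θ̃_{ν,σ} ≳ σ^{-(n-1)/4}` on
`supp θ_{ω,σ}` when `|ω−ν| ≤ √σ/16`, and every `ζ ∈ supp θ_{ω,σ}` satisfies
`|ζ̂ − ν| ≤ (3/8)√σ`. -/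
theorem modified_wave_packet_lower_bound (n : ℕ) (hn : 2 ≤ n)
    (φ Ψ : En n → ℝ)
    (hφ_sm : ContDiff ℝ (⊤ : ℕ∞) φ) (hφ_cs : HasCompactSupport φ)
    (hφ_nn : ∀ ζ, 0 ≤ φ ζ)
    (hφ_rad : ∀ ζ η : En n, ‖ζ‖ = ‖η‖ → φ ζ = φ η)
    (hφ_one : ∃ ε > (0 : ℝ), ∀ ζ : En n, ‖ζ‖ ≤ ε → φ ζ = 1)
    (hφ_supp : ∀ ζ : En n, (1 : ℝ) / 4 < ‖ζ‖ → φ ζ = 0)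
    (hΨ_sm : ContDiff ℝ (⊤ : ℕ∞) Ψ) (hΨ_cs : HasCompactSupport Ψ)
    (hΨ_nn : ∀ ζ, 0 ≤ Ψ ζ)
    (hΨ_rad : ∀ ζ η : En n, ‖ζ‖ = ‖η‖ → Ψ ζ = Ψ η)
    (hΨ_supp : ∀ ζ : En n, ‖ζ‖ ∉ Set.Icc (4 / 5 : ℝ) (5 / 4 : ℝ) → Ψ ζ = 0)
    (hΨ_int : ∀ ζ : En n, ζ ≠ 0 → (∫ σ in Set.Ioi (0 : ℝ), (Ψ (σ • ζ)) ^ 2 * σ⁻¹) = 1)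
    (φt Ψt : En n → ℝ)
    (hφt_sm : ContDiff ℝ (⊤ : ℕ∞) φt) (hφt_cs : HasCompactSupport φt)
    (hφt_nn : ∀ ζ, 0 ≤ φt ζ)
    (hφt_one : ∀ ζ : En n, ‖ζ‖ ≤ 3 / 4 → φt ζ = 1)
    (hφt_supp : ∀ ζ : En n, (1 : ℝ) < ‖ζ‖ → φt ζ = 0)
    (hΨt_sm : ContDiff ℝ (⊤ : ℕ∞) Ψt) (hΨt_cs : HasCompactSupport Ψt)
    (hΨt_nn : ∀ ζ, 0 ≤ Ψt ζ)
    (hΨt_rad : ∀ ζ η : En n, ‖ζ‖ = ‖η‖ → Ψt ζ = Ψt η)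
    (hΨt_one : ∀ ζ : En n, ‖ζ‖ ∈ Set.Icc (2 / 3 : ℝ) (3 / 2 : ℝ) → Ψt ζ = 1)
    (hΨt_supp : ∀ ζ : En n, ‖ζ‖ ∉ Set.Icc (1 / 2 : ℝ) (2 : ℝ) → Ψt ζ = 0)
    (hΨt_int : ∀ ζ : En n, ζ ≠ 0 → (∫ σ in Set.Ioi (0 : ℝ), (Ψt (σ • ζ)) ^ 2 * σ⁻¹) = 1)
    : ∃ c : ℝ, 0 < c ∧
        ∀ ω ν : En n, ‖ω‖ = 1 → ‖ν‖ = 1 → ∀ σ : ℝ, 0 < σ → σ < 1 →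
          ‖ω - ν‖ ≤ (1 / 16) * Real.sqrt σ →
          ∀ ζ ∈ tsupport (theta n φ Ψ ω σ),
            c * σ ^ (-((n : ℝ) - 1) / 4) ≤ theta n φt Ψt ν σ ζ ∧
              ‖‖ζ‖⁻¹ • ζ - ν‖ ≤ (3 / 8) * Real.sqrt σ :=
  modified_wave_packet_lower_bound' n hn φ Ψ hφ_supp hΨ_supp φt Ψt hφt_sm hφt_cs hφt_nn
    hφt_one hφt_supp hΨt_sm hΨt_cs hΨt_nn hΨt_one hΨt_supp

end
end

section
/- Volumes of anisotropic dyadic shells: let n ≥ 2. There exist constants 0 < c ≤ C < ∞, depending only on n, such that for all ω ∈ S^{n−1}, σ ∈ (0,1) and j ∈ ℤ₊ the following holds for the Lebesgue measure of C_{j,σ}: if 2^j σ ≤ 1, then c (2^j σ)^{(n+1)/2} ≤ |C_{j,σ}| ≤ C (2^j σ)^{(n+1)/2}, and if 2^j σ > 1, then c (2^j σ)^{n/2} ≤ |C_{j,σ}| ≤ C (2^j σ)^{n/2}. Here C_{0,σ} := {z ∈ ℝⁿ : |z|² + |⟨ω,z⟩| ≤ σ} and, for j ≥ 1, C_{j,σ}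 := {z ∈ ℝⁿ : 2^{j−1}σ < |z|² + |⟨ω,z⟩| ≤ 2^j σ}. -/
open MeasureTheory Real
open scoped ENNReal NNReal Classical

noncomputable section

/-- The anisotropic dyadic shell `C_{j,σ}` in the direction `ω`. -/
def Cshell (n : ℕ) (ω : En n) (σ : ℝ) (j : ℕ) : Set (En n) :=
  if j = 0 then {z : En n | ‖z‖ ^ 2 + |(inner ℝ ω z : ℝ)| ≤ σ}
  else {z : En n | 2 ^ (j - 1) * σ < ‖z‖ ^ 2 + |(inner ℝ ω z : ℝ)| ∧
    ‖z‖ ^ 2 + |(inner ℝ ω z : ℝ)| ≤ 2 ^ j * σ}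


namespace ShellAux

open Finset

variable {n : ℕ}

lemma norm_sq_eq' (z : En n) : ‖z‖ ^ 2 = ∑ i, z i ^ 2 := by
  rw [EuclideanSpace.norm_eq, Real.sq_sqrt (by positivity)]
  simp [Real.norm_eq_abs, sq_abs]

lemma vol_box (s : Fin n → Set ℝ) :
    volume {z : En n | ∀ i, z i ∈ s i} = ∏ i, volume (s i) := by
  rw [← MeasureTheory.volume_pi_pi s,
    ← (EuclideanSpace.volume_preserving_symm_measurableEquiv_toLp (Fin n)).map_eq,
    MeasurableEquiv.map_apply]
  congr 1
  ext z
  simp [Set.mem_univ_pi]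

lemma vol_box2 (hn : 0 < n) (A B : Set ℝ) :
    volume {z : En n | z ⟨0, hn⟩ ∈ A ∧ ∀ i, i ≠ ⟨0, hn⟩ → z i ∈ B} =
      volume A * volume B ^ (n - 1) := by
  have h1 : {z : En n | z ⟨0, hn⟩ ∈ A ∧ ∀ i, i ≠ ⟨0, hn⟩ → z i ∈ B} =
      {z : En n | ∀ i, z i ∈ (fun i => if i = ⟨0, hn⟩ then A else B) i} := by
    ext z
    constructor
    · rintro ⟨h0, hi⟩ i
      by_cases h : i = (⟨0, hn⟩ : Fin n)
      · subst h; simpa using h0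
      · simpa [h] using hi i h
    · intro h
      exact ⟨by simpa using h ⟨0, hn⟩, fun i hi => by simpa [hi] using h i⟩
  rw [h1, vol_box]
  rw [← Finset.mul_prod_erase Finset.univ _ (Finset.mem_univ (⟨0, hn⟩ : Fin n))]
  simp only [if_pos rfl]
  congr 1
  rw [Finset.prod_congr rfl (fun i hi => by rw [if_neg (Finset.ne_of_mem_erase hi)]),
    Finset.prod_const, Finset.card_erase_of_mem (Finset.mem_univ _), Finset.card_univ,
    Fintype.card_fin]

lemma upper_helper (hn : 0 < n) (S : Set (En n)) (m r : ℝ) (hm : 0 ≤ m) (hr : 0 ≤ r)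
    (h : ∀ z ∈ S, |z ⟨0, hn⟩| ≤ m ∧ ∀ i, |z i| ≤ r) :
    volume S ≤ ENNReal.ofReal ((2 * m) * (2 * r) ^ (n - 1)) := by
  have hsub : S ⊆
      {z : En n | z ⟨0, hn⟩ ∈ Set.Icc (-m) m ∧ ∀ i, i ≠ ⟨0, hn⟩ → z i ∈ Set.Icc (-r) r} :=
    fun z hz => ⟨abs_le.mp (h z hz).1, fun i _ => abs_le.mp ((h z hz).2 i)⟩
  refine (measure_mono hsub).trans ?_
  rw [vol_box2 hn, Real.volume_Icc, Real.volume_Icc,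
    ← ENNReal.ofReal_pow (by linarith), ← ENNReal.ofReal_mul (by linarith)]
  exact ENNReal.ofReal_le_ofReal (le_of_eq (by ring))

lemma lower_helper (hn : 0 < n) (S : Set (En n)) (a b δ : ℝ) (hab : a ≤ b) (hδ : 0 ≤ δ)
    (h : ∀ z : En n, z ⟨0, hn⟩ ∈ Set.Ioc a b →
      (∀ i, i ≠ ⟨0, hn⟩ → z i ∈ Set.Icc (-δ) δ) → z ∈ S) :
    ENNReal.ofReal ((b - a) * (2 * δ) ^ (n - 1)) ≤ volume S := by
  have hsub : {z : En n | z ⟨0, hn⟩ ∈ Set.Ioc a b ∧ ∀ i, i ≠ ⟨0, hn⟩ → z i ∈ Set.Icc (-δ) δ}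
      ⊆ S := fun z hz => h z hz.1 hz.2
  refine le_trans ?_ (measure_mono hsub)
  rw [vol_box2 hn, Real.volume_Ioc, Real.volume_Icc,
    ← ENNReal.ofReal_pow (by linarith), ← ENNReal.ofReal_mul (by linarith)]
  exact ENNReal.ofReal_le_ofReal (le_of_eq (by ring))

lemma norm_e1 (hn : 0 < n) : ‖e1 n‖ = 1 := by
  rw [e1, dif_pos hn, EuclideanSpace.norm_single]
  norm_num

lemma inner_e1 (hn : 0 < n) (z : En n) : (inner ℝ (e1 n) z : ℝ) = z ⟨0, hn⟩ := by
  rw [e1, dif_pos hn, EuclideanSpace.inner_single_left]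
  simp

lemma vol_rotate (hn : 0 < n) (ω : En n) (hω : ‖ω‖ = 1) (σ : ℝ) (j : ℕ) :
    volume (Cshell n ω σ j) = volume (Cshell n (e1 n) σ j) := by
  set R := Submodule.reflection (ℝ ∙ (ω - e1 n))ᗮ with hR
  have hRω : R ω = e1 n := Submodule.reflection_sub (by rw [hω, norm_e1 hn])
  have key : ∀ z : En n, ‖R z‖ ^ 2 + |(inner ℝ (e1 n) (R z) : ℝ)| = ‖z‖ ^ 2 + |(inner ℝ ω z : ℝ)| := by
    intro z
    have h1 : (inner ℝ (e1 n) (R z) : ℝ) = inner ℝ ω z := by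
      rw [← hRω]; exact R.inner_map_map ω z
    rw [R.norm_map, h1]
  have hpre : Cshell n ω σ j = R.toMeasurableEquiv ⁻¹' Cshell n (e1 n) σ j := by
    ext z
    simp only [Cshell, Set.mem_preimage, LinearIsometryEquiv.coe_toMeasurableEquiv]
    split_ifs <;> simp only [Set.mem_setOf_eq, key z]
  rw [hpre, ← MeasurableEquiv.map_apply R.toMeasurableEquiv]
  congr 1
  exact R.measurePreserving.map_eq

lemma sqrt_pow_eq {t : ℝ} (ht : 0 < t) (k : ℕ) : Real.sqrt t ^ k = t ^ ((k : ℝ) / 2) := by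
  rw [Real.sqrt_eq_rpow, ← Real.rpow_natCast (t ^ ((1 : ℝ) / 2)) k, ← Real.rpow_mul ht.le]
  congr 1
  ring

lemma one_le_sqrt_one_add {u : ℝ} (hu : 0 ≤ u) : 1 ≤ Real.sqrt (1 + u) := by
  have h := Real.sq_sqrt (show (0:ℝ) ≤ 1 + u by linarith)
  nlinarith [Real.sqrt_nonneg (1 + u)]

lemma a_eq {t : ℝ} (ht : 0 < t) :
    ((Real.sqrt (1 + 2 * t) - 1) / 2) ^ 2 + (Real.sqrt (1 + 2 * t) - 1) / 2 = t / 2 := by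
  have h := Real.sq_sqrt (show (0:ℝ) ≤ 1 + 2 * t by linarith)
  linear_combination h / 4

lemma b_eq {t : ℝ} (ht : 0 < t) :
    ((Real.sqrt (1 + 5 * t / 2) - 1) / 2) ^ 2 + (Real.sqrt (1 + 5 * t / 2) - 1) / 2
      = 5 * t / 8 := by
  have h := Real.sq_sqrt (show (0:ℝ) ≤ 1 + 5 * t / 2 by linarith)
  linear_combination h / 4

lemma sqrt_four : Real.sqrt 4 = 2 := by
  rw [show (4:ℝ) = 2 ^ 2 by norm_num, Real.sqrt_sq (by norm_num)]

lemma endpoints_diff_low {t : ℝ} (ht0 : 0 < t) (ht1 : t ≤ 1) :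
    t / 16 ≤ (Real.sqrt (1 + 5 * t / 2) - 1) / 2 - (Real.sqrt (1 + 2 * t) - 1) / 2 := by
  set X := Real.sqrt (1 + 2 * t) with hX
  set Y := Real.sqrt (1 + 5 * t / 2) with hY
  have hX2 : X ^ 2 = 1 + 2 * t := Real.sq_sqrt (by linarith)
  have hY2 : Y ^ 2 = 1 + 5 * t / 2 := Real.sq_sqrt (by linarith)
  have hXY : X ≤ Y := Real.sqrt_le_sqrt (by linarith)
  have hXle : X ≤ 2 := by
    calc X ≤ Real.sqrt 4 := Real.sqrt_le_sqrt (by linarith)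
      _ = 2 := sqrt_four
  have hYle : Y ≤ 2 := by
    calc Y ≤ Real.sqrt 4 := Real.sqrt_le_sqrt (by linarith)
      _ = 2 := sqrt_four
  have hmul := mul_nonneg (sub_nonneg.mpr hXY) (show (0:ℝ) ≤ 4 - (Y + X) by linarith)
  nlinarith [hmul, hX2, hY2]

lemma endpoints_diff_high {t : ℝ} (ht1 : 1 < t) :
    Real.sqrt t / 16 ≤
      (Real.sqrt (1 + 5 * t / 2) - 1) / 2 - (Real.sqrt (1 + 2 * t) - 1) / 2 := by
  have ht0 : (0:ℝ) < t := by linarith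
  have hst : Real.sqrt t ^ 2 = t := Real.sq_sqrt ht0.le
  have hst0 : 0 < Real.sqrt t := Real.sqrt_pos.mpr ht0
  have h4t : Real.sqrt (4 * t) = 2 * Real.sqrt t := by
    rw [Real.sqrt_mul (by norm_num), sqrt_four]
  set X := Real.sqrt (1 + 2 * t) with hX
  set Y := Real.sqrt (1 + 5 * t / 2) with hY
  have hX2 : X ^ 2 = 1 + 2 * t := Real.sq_sqrt (by linarith)
  have hY2 : Y ^ 2 = 1 + 5 * t / 2 := Real.sq_sqrt (by linarith)
  have hXY : X ≤ Y := Real.sqrt_le_sqrt (by linarith)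
  have hXle : X ≤ 2 * Real.sqrt t := by
    calc X ≤ Real.sqrt (4 * t) := Real.sqrt_le_sqrt (by linarith)
      _ = 2 * Real.sqrt t := h4t
  have hYle : Y ≤ 2 * Real.sqrt t := by
    calc Y ≤ Real.sqrt (4 * t) := Real.sqrt_le_sqrt (by linarith)
      _ = 2 * Real.sqrt t := h4t
  have hmul := mul_nonneg (sub_nonneg.mpr hXY)
    (show (0:ℝ) ≤ 4 * Real.sqrt t - (Y + X) by linarith)
  nlinarith [hmul, hX2, hY2, hst, hst0]

end ShellAux

open ShellAux Finset in
set_option maxHeartbeats 2000000 in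
/-- volumes of anisotropic dyadic shells. -/
theorem volume_anisotropic_shells (n : ℕ) (hn : 2 ≤ n) :
    ∃ c C : ℝ, 0 < c ∧ c ≤ C ∧
      ∀ ω : En n, ‖ω‖ = 1 → ∀ σ : ℝ, 0 < σ → σ < 1 → ∀ j : ℕ,
        ((2 : ℝ) ^ j * σ ≤ 1 →
          c * ((2 : ℝ) ^ j * σ) ^ (((n : ℝ) + 1) / 2) ≤ (volume (Cshell n ω σ j)).toReal ∧
            (volume (Cshell n ω σ j)).toReal ≤ C * ((2 : ℝ) ^ j * σ) ^ (((n : ℝ) + 1) / 2)) ∧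
        (1 < (2 : ℝ) ^ j * σ →
          c * ((2 : ℝ) ^ j * σ) ^ ((n : ℝ) / 2) ≤ (volume (Cshell n ω σ j)).toReal ∧
            (volume (Cshell n ω σ j)).toReal ≤ C * ((2 : ℝ) ^ j * σ) ^ ((n : ℝ) / 2)) := by
  have hn0 : 0 < n := by omega
  have hn1R : (1 : ℝ) ≤ (n : ℝ) := by exact_mod_cast Nat.one_le_iff_ne_zero.mpr (by omega)
  have h8n : (1 : ℝ) ≤ 8 * (n : ℝ) := by linarith
  have hexp0 : (0 : ℝ) ≤ ((n : ℝ) - 1) / 2 := by linarith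
  set K : ℝ := 2 ^ (n - 1) * (((8 : ℝ) * n) ^ (((n : ℝ) - 1) / 2))⁻¹ with hK
  have h8e : (0 : ℝ) < ((8 : ℝ) * n) ^ (((n : ℝ) - 1) / 2) := by positivity
  have h8e1 : (1 : ℝ) ≤ ((8 : ℝ) * n) ^ (((n : ℝ) - 1) / 2) := by
    calc (1 : ℝ) = 1 ^ (((n : ℝ) - 1) / 2) := (Real.one_rpow _).symm
      _ ≤ ((8 : ℝ) * n) ^ (((n : ℝ) - 1) / 2) := Real.rpow_le_rpow zero_le_one h8n hexp0
  have hKpos : 0 < K := by positivity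
  have hKle : K ≤ 2 ^ (n - 1) := by
    have h2 : (0:ℝ) < 2 ^ (n-1) := by positivity
    calc K ≤ 2 ^ (n - 1) * 1 := by
          apply mul_le_mul_of_nonneg_left _ h2.le
          rw [inv_le_one_iff₀]; right; exact h8e1
      _ = 2 ^ (n - 1) := mul_one _
  refine ⟨K / 16, 2 ^ n, by positivity, ?_, ?_⟩
  · have h1 : (2:ℝ) ^ (n - 1) ≤ 2 ^ n := pow_le_pow_right₀ one_le_two (by omega)
    have h2 : (0:ℝ) < 2 ^ (n-1) := by positivity
    linarith
  intro ω hω σ hσ0 hσ1 j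
  have hvol : volume (Cshell n ω σ j) = volume (Cshell n (e1 n) σ j) :=
    vol_rotate hn0 ω hω σ j
  set i0 : Fin n := ⟨0, hn0⟩ with hi0
  set t : ℝ := 2 ^ j * σ with htdef
  have ht0 : 0 < t := by positivity
  have hst : Real.sqrt t ^ 2 = t := Real.sq_sqrt ht0.le
  have hst0 : 0 < Real.sqrt t := Real.sqrt_pos.mpr ht0
  -- membership facts
  have hmemQ : ∀ z ∈ Cshell n (e1 n) σ j, ‖z‖ ^ 2 + |z i0| ≤ t := by
    intro z hz
    rw [Cshell] at hz
    split_ifs at hz with hj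
    · rw [Set.mem_setOf_eq, inner_e1 hn0] at hz
      rw [htdef, hj]
      norm_num
      exact hz
    · rw [Set.mem_setOf_eq, inner_e1 hn0] at hz
      rw [htdef]
      exact hz.2
  have hcoord : ∀ z ∈ Cshell n (e1 n) σ j, ∀ i, |z i| ≤ Real.sqrt t := by
    intro z hz i
    have h2 : z i ^ 2 ≤ ‖z‖ ^ 2 := by
      rw [norm_sq_eq']
      exact Finset.single_le_sum (f := fun i => z i ^ 2) (fun j _ => sq_nonneg _)
        (Finset.mem_univ i)
    have h1 : z i ^ 2 ≤ t := by linarith [hmemQ z hz, abs_nonneg (z i0)]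
    calc |z i| = Real.sqrt (z i ^ 2) := (Real.sqrt_sq_eq_abs _).symm
      _ ≤ Real.sqrt t := Real.sqrt_le_sqrt h1
  -- power identities
  have hcast : ((n - 1 : ℕ) : ℝ) = (n : ℝ) - 1 := by
    rw [Nat.cast_sub hn0]; norm_num
  have hsq : Real.sqrt t ^ (n - 1) = t ^ (((n : ℝ) - 1) / 2) := by
    rw [sqrt_pow_eq ht0, hcast]
  have h2pow : (2 : ℝ) * 2 ^ (n - 1) = 2 ^ n := by
    rw [← pow_succ']
    congr 1
    omega
  have hpow1 : t * t ^ (((n : ℝ) - 1) / 2) = t ^ (((n : ℝ) + 1) / 2) := by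
    have h : t ^ ((1 : ℝ)) * t ^ (((n : ℝ) - 1) / 2) = t ^ (((n : ℝ) + 1) / 2) := by
      rw [← Real.rpow_add ht0]
      congr 1
      ring
    simpa [Real.rpow_one] using h
  have hpow2 : Real.sqrt t * t ^ (((n : ℝ) - 1) / 2) = t ^ ((n : ℝ) / 2) := by
    rw [Real.sqrt_eq_rpow, ← Real.rpow_add ht0]
    congr 1
    ring
  -- upper machinery
  have hUP : ∀ m : ℝ, 0 ≤ m → (∀ z ∈ Cshell n (e1 n) σ j, |z i0| ≤ m) →
      volume (Cshell n (e1 n) σ j) ≤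
        ENNReal.ofReal (2 ^ n * (m * t ^ (((n : ℝ) - 1) / 2))) := by
    intro m hm h
    refine (upper_helper hn0 _ m (Real.sqrt t) hm (Real.sqrt_nonneg t)
      fun z hz => ⟨h z hz, hcoord z hz⟩).trans ?_
    apply ENNReal.ofReal_le_ofReal
    apply le_of_eq
    rw [mul_pow, hsq, ← h2pow]
    ring
  have hm_t : ∀ z ∈ Cshell n (e1 n) σ j, |z i0| ≤ t := by
    intro z hz
    linarith [hmemQ z hz, sq_nonneg ‖z‖]
  have hfin : volume (Cshell n (e1 n) σ j) ≠ ⊤ :=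
    ne_top_of_le_ne_top ENNReal.ofReal_ne_top (hUP t ht0.le hm_t)
  have hupR : ∀ m : ℝ, 0 ≤ m → (∀ z ∈ Cshell n (e1 n) σ j, |z i0| ≤ m) →
      (volume (Cshell n (e1 n) σ j)).toReal ≤ 2 ^ n * (m * t ^ (((n : ℝ) - 1) / 2)) :=
    fun m hm h => ENNReal.toReal_le_of_le_ofReal (by positivity) (hUP m hm h)
  -- lower machinery
  set δ : ℝ := Real.sqrt (t / (8 * n)) with hδdef
  have hδ0 : 0 ≤ δ := Real.sqrt_nonneg _
  have hδsq : δ ^ 2 = t / (8 * n) := Real.sq_sqrt (by positivity)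
  have hδpow : (2 * δ) ^ (n - 1) = K * t ^ (((n : ℝ) - 1) / 2) := by
    rw [mul_pow, hδdef, sqrt_pow_eq (show (0:ℝ) < t / (8 * n) by positivity), hcast,
      Real.div_rpow ht0.le (by positivity), hK]
    field_simp
  have hIN : ∀ a b : ℝ, 0 ≤ a → (j = 0 ∨ t / 2 ≤ a ^ 2 + a) → b ^ 2 + b ≤ 5 * t / 8 →
      ∀ z : En n, z i0 ∈ Set.Ioc a b → (∀ i, i ≠ i0 → z i ∈ Set.Icc (-δ) δ) →
        z ∈ Cshell n (e1 n) σ j := by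
    intro a b ha0 hlow hhigh z hz0 hzi
    obtain ⟨hz0a, hz0b⟩ := hz0
    have hz0pos : 0 < z i0 := lt_of_le_of_lt ha0 hz0a
    have hsum : ∑ i ∈ Finset.univ.erase i0, z i ^ 2 ≤ t / 8 := by
      have hstep : ∀ i ∈ Finset.univ.erase i0, z i ^ 2 ≤ δ ^ 2 := by
        intro i hi
        have h := hzi i (Finset.ne_of_mem_erase hi)
        exact sq_le_sq' h.1 h.2
      calc ∑ i ∈ Finset.univ.erase i0, z i ^ 2 ≤ (Finset.univ.erase i0).card • (δ ^ 2) :=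
            Finset.sum_le_card_nsmul _ _ _ hstep
        _ = ((n - 1 : ℕ) : ℝ) * (δ ^ 2) := by
            rw [Finset.card_erase_of_mem (Finset.mem_univ _), Finset.card_univ,
              Fintype.card_fin, nsmul_eq_mul]
        _ ≤ t / 8 := by
            rw [hδsq, hcast]
            have hnpos : (0:ℝ) < (n:ℝ) := by positivity
            have h1 : ((n:ℝ) - 1) * (t / (8 * n)) ≤ (n:ℝ) * (t / (8 * n)) :=
              mul_le_mul_of_nonneg_right (by linarith) (by positivity)
            have h2 : (n:ℝ) * (t / (8 * n)) = t / 8 := by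
              field_simp
            linarith
    have hsum0 : (0:ℝ) ≤ ∑ i ∈ Finset.univ.erase i0, z i ^ 2 :=
      Finset.sum_nonneg fun i _ => sq_nonneg _
    have hnorm : ‖z‖ ^ 2 = z i0 ^ 2 + ∑ i ∈ Finset.univ.erase i0, z i ^ 2 := by
      rw [norm_sq_eq', ← Finset.add_sum_erase _ _ (Finset.mem_univ i0)]
    have habs : |z i0| = z i0 := abs_of_pos hz0pos
    have hzb2 : z i0 ^ 2 + z i0 ≤ b ^ 2 + b :=
      add_le_add (pow_le_pow_left₀ hz0pos.le hz0b 2) hz0b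
    rw [Cshell]
    split_ifs with hj
    · have htσ : t = σ := by rw [htdef, hj]; norm_num
      rw [Set.mem_setOf_eq, inner_e1 hn0]
      rw [hnorm, habs]
      linarith [hsum, hzb2, hhigh, htσ]
    · rcases hlow with hj0 | hlow
      · exact absurd hj0 hj
      have h2 : (2 : ℝ) ^ (j - 1) * σ = t / 2 := by
        have hj1 : (2:ℝ) ^ j = 2 * 2 ^ (j - 1) := by
          rw [← pow_succ']
          congr 1
          omega
        rw [htdef, hj1]
        ring
      refine ⟨?_, ?_⟩
      · rw [inner_e1 hn0, h2, hnorm, habs]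
        have hsq2 : a ^ 2 ≤ z i0 ^ 2 := pow_le_pow_left₀ ha0 hz0a.le 2
        have hlt : a ^ 2 + a < z i0 ^ 2 + z i0 := add_lt_add_of_le_of_lt hsq2 hz0a
        linarith
      · rw [inner_e1 hn0, hnorm, habs, ← htdef]
        linarith
  have hlowR : ∀ a b : ℝ, 0 ≤ a → a ≤ b → (j = 0 ∨ t / 2 ≤ a ^ 2 + a) →
      b ^ 2 + b ≤ 5 * t / 8 →
      (b - a) * (K * t ^ (((n : ℝ) - 1) / 2)) ≤ (volume (Cshell n (e1 n) σ j)).toReal := by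
    intro a b ha hab hlo hhi
    have h1 := lower_helper hn0 _ a b δ hab hδ0 (hIN a b ha hlo hhi)
    rw [hδpow] at h1
    exact (ENNReal.ofReal_le_iff_le_toReal hfin).mp h1
  -- the explicit endpoints
  set a : ℝ := (Real.sqrt (1 + 2 * t) - 1) / 2 with hadef
  set b : ℝ := (Real.sqrt (1 + 5 * t / 2) - 1) / 2 with hbdef
  have ha0 : 0 ≤ a := by
    rw [hadef]
    have h := one_le_sqrt_one_add (show (0:ℝ) ≤ 2 * t by linarith)
    linarith
  have hab : a ≤ b := by
    rw [hadef, hbdef]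
    have h := Real.sqrt_le_sqrt (show 1 + 2 * t ≤ 1 + 5 * t / 2 by linarith)
    linarith
  have haa : a ^ 2 + a = t / 2 := by rw [hadef]; exact a_eq ht0
  have hbb : b ^ 2 + b = 5 * t / 8 := by rw [hbdef]; exact b_eq ht0
  have hlowKey : (b - a) * (K * t ^ (((n : ℝ) - 1) / 2)) ≤
      (volume (Cshell n (e1 n) σ j)).toReal :=
    hlowR a b ha0 hab (Or.inr haa.ge) hbb.le
  have hKt0 : 0 ≤ K * t ^ (((n : ℝ) - 1) / 2) := by positivity
  rw [hvol]
  constructor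
  · -- case t ≤ 1
    intro hc1
    have hba : t / 16 ≤ b - a := by
      rw [hadef, hbdef]
      exact endpoints_diff_low ht0 hc1
    constructor
    · calc K / 16 * t ^ (((n : ℝ) + 1) / 2) = t / 16 * (K * t ^ (((n : ℝ) - 1) / 2)) := by
            rw [← hpow1]; ring
        _ ≤ (b - a) * (K * t ^ (((n : ℝ) - 1) / 2)) := by
            apply mul_le_mul_of_nonneg_right hba hKt0
        _ ≤ _ := hlowKey
    · calc (volume (Cshell n (e1 n) σ j)).toReal
          ≤ 2 ^ n * (t * t ^ (((n : ℝ) - 1) / 2)) := hupR t ht0.le hm_t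
        _ = 2 ^ n * t ^ (((n : ℝ) + 1) / 2) := by rw [hpow1]
  · -- case 1 < t
    intro hc2
    have hba : Real.sqrt t / 16 ≤ b - a := by
      rw [hadef, hbdef]
      exact endpoints_diff_high hc2
    constructor
    · calc K / 16 * t ^ ((n : ℝ) / 2)
          = Real.sqrt t / 16 * (K * t ^ (((n : ℝ) - 1) / 2)) := by rw [← hpow2]; ring
        _ ≤ (b - a) * (K * t ^ (((n : ℝ) - 1) / 2)) := by
            apply mul_le_mul_of_nonneg_right hba hKt0
        _ ≤ _ := hlowKey
    · have hm_s : ∀ z ∈ Cshell n (e1 n) σ j, |z i0| ≤ Real.sqrt t :=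
        fun z hz => hcoord z hz i0
      calc (volume (Cshell n (e1 n) σ j)).toReal
          ≤ 2 ^ n * (Real.sqrt t * t ^ (((n : ℝ) - 1) / 2)) :=
            hupR (Real.sqrt t) (Real.sqrt_nonneg t) hm_s
        _ = 2 ^ n * t ^ ((n : ℝ) / 2) := by rw [hpow2]


end
end
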